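/- arXiv:2002.01884 — 5 statements merged into one kernel-verified Lean document; each statement's English description precedes it below -/
import Mathlib

section
/- Let λ ∈ ℝ, α > 0, 0 < β < α, δ > 0, and set γ = √(α² − β²). If x ∈ ℝ satisfies (x/√(δ² + x²)) · K_{λ−3/2}(α√(δ² + x²)) / K_{λ−1/2}(α√(δ² + x²)) = β/α (so x is the mode of the generalized hyperbolic distribution GH(λ, α, β, δ, 0)), then x < δβK_{λ+1}(δγ)/(γK_λ(δγ)); that is, the mode is strictly less than the mean. -/
open Real MeasureTheory

/-- Modified Bessel function of the second kind. -/
noncomputable def besselK (ν x : ℝ) : ℝ :=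
  ∫ t in Set.Ioi (0:ℝ), Real.exp (-x * Real.cosh t) * Real.cosh (ν * t)

open Set Filter

lemma cosh_ge_sq (t : ℝ) (ht : 0 ≤ t) : t^2/8 ≤ Real.cosh t := by
  have h1 : (1 + t/2) ≤ Real.exp (t/2) := by linarith [Real.add_one_le_exp (t/2)]
  have h2 : (1 + t/2)^2 ≤ Real.exp (t/2)^2 := by
    apply pow_le_pow_left₀ (by linarith) h1
  have h3 : Real.exp (t/2)^2 = Real.exp t := by
    rw [sq, ← Real.exp_add]; norm_num
  have h4 : t^2/4 ≤ Real.exp t := by nlinarith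
  have h5 : Real.exp t / 2 ≤ Real.cosh t := by
    rw [Real.cosh_eq]; linarith [Real.exp_nonneg (-t)]
  linarith

lemma integrand_le (ν x t : ℝ) (hx : 0 < x) (ht : 0 ≤ t) :
    Real.exp (-x * Real.cosh t) * Real.cosh (ν * t) ≤
      Real.exp (2*(|ν|+2)^2/x) * Real.exp (-t) := by
  set a := |ν| + 1 with ha
  clear_value a
  have ha0 : (0:ℝ) < a := by rw [ha]; positivity
  have h1 : Real.cosh (ν * t) ≤ Real.exp (a * t) := by
    rw [← Real.cosh_abs, Real.cosh_eq]
    have h3 : |ν*t| ≤ a*t := by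
      rw [abs_mul, abs_of_nonneg ht]; nlinarith [abs_nonneg ν]
    have h2 : Real.exp (-|ν*t|) ≤ Real.exp (a*t) := by
      apply Real.exp_le_exp.2; have := abs_nonneg (ν*t); linarith
    linarith [Real.exp_le_exp.2 h3]
  have key : a*t - x * Real.cosh t ≤ 2*(a+1)^2/x - t := by
    have hc := cosh_ge_sq t ht
    have hmul : x * (t^2/8) ≤ x * Real.cosh t := by nlinarith
    have h7 : (a+1)*t - x*t^2/8 ≤ 2*(a+1)^2/x := by
      rw [le_div_iff₀ hx]; nlinarith [sq_nonneg (x*t - 4*(a+1))]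
    linarith
  have hab : (|ν|+2) = a + 1 := by rw [ha]; ring
  rw [hab]
  calc Real.exp (-x * Real.cosh t) * Real.cosh (ν * t)
      ≤ Real.exp (-x * Real.cosh t) * Real.exp (a*t) :=
        mul_le_mul_of_nonneg_left h1 (Real.exp_nonneg _)
    _ = Real.exp (a*t - x*Real.cosh t) := by rw [← Real.exp_add]; ring_nf
    _ ≤ Real.exp (2*(a+1)^2/x - t) := Real.exp_le_exp.2 key
    _ = Real.exp (2*(a+1)^2/x) * Real.exp (-t) := by rw [← Real.exp_add]; ring_nf

lemma integrand_cont (ν x : ℝ) :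
    Continuous (fun t : ℝ => Real.exp (-x * Real.cosh t) * Real.cosh (ν * t)) := by
  fun_prop

lemma integrand_pos (ν x t : ℝ) : 0 < Real.exp (-x * Real.cosh t) * Real.cosh (ν * t) :=
  mul_pos (Real.exp_pos _) (lt_of_lt_of_le one_pos (Real.one_le_cosh _))

lemma besselK_integrableOn (ν x : ℝ) (hx : 0 < x) :
    IntegrableOn (fun t : ℝ => Real.exp (-x * Real.cosh t) * Real.cosh (ν * t)) (Set.Ioi 0) := by
  apply Integrable.mono'
    (((exp_neg_integrableOn_Ioi 0 one_pos)).const_mul (Real.exp (2*(|ν|+2)^2/x)))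
    (integrand_cont ν x).aestronglyMeasurable
  filter_upwards [ae_restrict_mem measurableSet_Ioi] with t ht
  rw [Real.norm_eq_abs, abs_of_pos (integrand_pos ν x t)]
  simpa using integrand_le ν x t hx (le_of_lt ht)

lemma besselK_pos (ν x : ℝ) (hx : 0 < x) : 0 < besselK ν x := by
  rw [besselK]
  rw [setIntegral_pos_iff_support_of_nonneg_ae]
  · have : Function.support (fun t : ℝ => Real.exp (-x * Real.cosh t) * Real.cosh (ν * t)) = Set.univ := by
      ext t
      simp only [Function.mem_support, Set.mem_univ, iff_true]
      exact ne_of_gt (integrand_pos ν x t)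
    rw [this, Set.univ_inter]
    simp [Real.volume_Ioi]
  · filter_upwards with t using le_of_lt (integrand_pos ν x t)
  · exact besselK_integrableOn ν x hx

lemma sinh_mul_sinh (μ t : ℝ) :
    Real.sinh t * Real.sinh (μ * t) =
      (Real.cosh ((μ+1)*t) - Real.cosh ((μ-1)*t)) / 2 := by
  have h1 : (μ+1)*t = μ*t + t := by ring
  have h2 : (μ-1)*t = μ*t - t := by ring
  rw [h1, h2, Real.cosh_add, Real.cosh_sub]; ring

lemma besselK_rec (μ x : ℝ) (hx : 0 < x) :
    x * besselK (μ+1) x = x * besselK (μ-1) x + 2*μ * besselK μ x := by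
  set g : ℝ → ℝ := fun t => Real.exp (-x * Real.cosh t) * Real.sinh (μ * t) with hg
  set F : ℝ → ℝ := fun t =>
      x/2 * (Real.exp (-x * Real.cosh t) * Real.cosh ((μ-1) * t)) -
      x/2 * (Real.exp (-x * Real.cosh t) * Real.cosh ((μ+1) * t)) +
      μ * (Real.exp (-x * Real.cosh t) * Real.cosh (μ * t)) with hF
  have i1 : IntegrableOn (fun t : ℝ => x/2 * (Real.exp (-x * Real.cosh t) * Real.cosh ((μ-1) * t))) (Set.Ioi 0) :=
    (besselK_integrableOn (μ-1) x hx).const_mul _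
  have i2 : IntegrableOn (fun t : ℝ => x/2 * (Real.exp (-x * Real.cosh t) * Real.cosh ((μ+1) * t))) (Set.Ioi 0) :=
    (besselK_integrableOn (μ+1) x hx).const_mul _
  have i3 : IntegrableOn (fun t : ℝ => μ * (Real.exp (-x * Real.cosh t) * Real.cosh (μ * t))) (Set.Ioi 0) :=
    (besselK_integrableOn μ x hx).const_mul _
  have hderiv : ∀ t : ℝ, HasDerivAt g (F t) t := by
    intro t
    have h1 : HasDerivAt (fun s : ℝ => -x * Real.cosh s) (-x * Real.sinh t) t :=
      (Real.hasDerivAt_cosh t).const_mul (-x)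
    have h2 := h1.exp
    have h3' : HasDerivAt (fun s : ℝ => μ * s) μ t := by
      simpa using (hasDerivAt_id t).const_mul μ
    have h3 : HasDerivAt (fun s : ℝ => Real.sinh (μ * s)) (Real.cosh (μ*t) * μ) t :=
      (Real.hasDerivAt_sinh (μ*t)).comp t h3'
    have h4 := h2.mul h3
    refine h4.congr_deriv ?_
    have hs := sinh_mul_sinh μ t
    rw [hF]
    beta_reduce
    linear_combination (-(x * Real.exp (-x * Real.cosh t))) * hs
  have hFint : IntegrableOn F (Set.Ioi 0) := (i1.sub i2).add i3
  have htend : Filter.Tendsto g Filter.atTop (nhds 0) := by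
    have hb : Filter.Tendsto (fun t : ℝ => Real.exp (2*(|μ|+2)^2/x) * Real.exp (-t))
        Filter.atTop (nhds 0) := by
      simpa using (Real.tendsto_exp_atBot.comp tendsto_neg_atTop_atBot).const_mul
        (Real.exp (2*(|μ|+2)^2/x))
    apply squeeze_zero_norm' _ hb
    filter_upwards [Filter.eventually_ge_atTop (0:ℝ)] with t ht
    rw [hg, Real.norm_eq_abs, abs_mul, abs_of_pos (Real.exp_pos _), Real.abs_sinh]
    calc Real.exp (-x * Real.cosh t) * Real.sinh |μ * t|
        ≤ Real.exp (-x * Real.cosh t) * Real.cosh (μ * t) := by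
          apply mul_le_mul_of_nonneg_left _ (Real.exp_nonneg _)
          rw [← Real.cosh_abs]
          linarith [Real.sinh_lt_cosh |μ * t|]
      _ ≤ _ := integrand_le μ x t hx ht
  have hcont : ContinuousWithinAt g (Set.Ici 0) 0 := by
    apply Continuous.continuousWithinAt; fun_prop
  have key : ∫ t in Set.Ioi (0:ℝ), F t = 0 - g 0 :=
    integral_Ioi_of_hasDerivAt_of_tendsto hcont (fun t _ => hderiv t) hFint htend
  have hg0 : g 0 = 0 := by simp [hg]
  have e1 := MeasureTheory.integral_sub i1 i2
  have e2 := MeasureTheory.integral_add (i1.sub i2) i3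
  have hsplit : ∫ t in Set.Ioi (0:ℝ), F t =
      x/2 * besselK (μ-1) x - x/2 * besselK (μ+1) x + μ * besselK μ x := by
    simp only [Pi.sub_apply] at e2
    rw [hF, besselK, besselK, besselK]
    beta_reduce
    rw [e2, e1, MeasureTheory.integral_const_mul, MeasureTheory.integral_const_mul,
      MeasureTheory.integral_const_mul]
  rw [hsplit, hg0] at key
  linarith

lemma cosh_sq_le (μ t : ℝ) :
    Real.cosh (μ*t)^2 ≤ Real.cosh ((μ-1)*t) * Real.cosh ((μ+1)*t) := by
  have h1 : (μ+1)*t = μ*t + t := by ring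
  have h2 : (μ-1)*t = μ*t - t := by ring
  rw [h1, h2, Real.cosh_add, Real.cosh_sub]
  have c1 := Real.cosh_sq_sub_sinh_sq (μ*t)
  have c2 := Real.cosh_sq_sub_sinh_sq t
  nlinarith [sq_nonneg (Real.sinh t)]

lemma besselK_turan (μ x : ℝ) (hx : 0 < x) :
    besselK μ x ^ 2 ≤ besselK (μ-1) x * besselK (μ+1) x := by
  have ha : 0 < besselK (μ-1) x := besselK_pos _ _ hx
  have hb : 0 < besselK (μ+1) x := besselK_pos _ _ hx
  have hk : 0 < besselK μ x := besselK_pos _ _ hx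
  set a := besselK (μ-1) x
  set b := besselK (μ+1) x
  set k := besselK μ x with hkdef
  set ε := k / a with hε
  have hε0 : 0 < ε := div_pos hk ha
  have H : 2*ε*k ≤ ε^2 * a + b := by
    have pt : ∀ t ∈ Set.Ioi (0:ℝ),
        2*ε*(Real.exp (-x * Real.cosh t) * Real.cosh (μ * t)) ≤
        ε^2*(Real.exp (-x * Real.cosh t) * Real.cosh ((μ-1) * t)) +
          Real.exp (-x * Real.cosh t) * Real.cosh ((μ+1) * t) := by
      intro t _
      have hcore : 2*ε*Real.cosh (μ*t) ≤ ε^2*Real.cosh ((μ-1)*t) + Real.cosh ((μ+1)*t) := by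
        nlinarith [cosh_sq_le μ t, sq_nonneg (ε*Real.cosh ((μ-1)*t) - Real.cosh (μ*t)),
          Real.one_le_cosh ((μ-1)*t), Real.one_le_cosh ((μ+1)*t), Real.one_le_cosh (μ*t)]
      nlinarith [Real.exp_pos (-x * Real.cosh t), hcore]
    have hint : ∫ t in Set.Ioi (0:ℝ), 2*ε*(Real.exp (-x * Real.cosh t) * Real.cosh (μ * t)) ≤
        ∫ t in Set.Ioi (0:ℝ), (ε^2*(Real.exp (-x * Real.cosh t) * Real.cosh ((μ-1) * t)) +
          Real.exp (-x * Real.cosh t) * Real.cosh ((μ+1) * t)) := by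
      apply setIntegral_mono_on
      · exact (besselK_integrableOn μ x hx).const_mul _
      · exact ((besselK_integrableOn (μ-1) x hx).const_mul _).add (besselK_integrableOn (μ+1) x hx)
      · exact measurableSet_Ioi
      · exact pt
    rw [MeasureTheory.integral_add ((besselK_integrableOn (μ-1) x hx).const_mul _)
        (besselK_integrableOn (μ+1) x hx), MeasureTheory.integral_const_mul,
        MeasureTheory.integral_const_mul] at hint
    exact hint
  have hq : ε^2 * a = k^2/a := by rw [hε]; field_simp
  rw [hq, hε] at H
  have H2 : k^2/a ≤ b := by
    have : 2*(k/a)*k = 2*(k^2/a) := by ring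
    rw [this] at H; linarith
  rw [div_le_iff₀ ha] at H2
  linarith [H2]

lemma besselK_ratio_upper (ν x : ℝ) (hx : 0 < x) :
    x * besselK (ν+1) x ≤ ((ν+1) + Real.sqrt ((ν+1)^2 + x^2)) * besselK ν x := by
  have ht := besselK_turan (ν+1) x hx
  have hr := besselK_rec (ν+1) x hx
  have e1 : ν + 1 - 1 = ν := by ring
  rw [e1] at ht hr
  have ha : 0 < besselK ν x := besselK_pos _ _ hx
  have hb : 0 < besselK (ν+1) x := besselK_pos _ _ hx
  set a := besselK ν x
  set b := besselK (ν+1) x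
  set c := besselK (ν+1+1) x
  set S := Real.sqrt ((ν+1)^2 + x^2) with hS
  have hS0 : 0 ≤ S := Real.sqrt_nonneg _
  have hS2 : S^2 = (ν+1)^2 + x^2 := Real.sq_sqrt (by positivity)
  -- x b² ≤ x a² + 2(ν+1) a b
  have key : x * b^2 ≤ x * a^2 + 2*(ν+1)*a*b := by nlinarith [ht, hr]
  -- (x b - (ν+1) a)² ≤ S² a²
  have key2 : (x*b - (ν+1)*a)^2 ≤ S^2 * a^2 := by nlinarith [key]
  nlinarith [key2, mul_nonneg hS0 (le_of_lt ha), sq_nonneg (x*b - (ν+1)*a + S*a)]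

lemma besselK_ratio_lower (ν x : ℝ) (hx : 0 < x) :
    (ν + Real.sqrt (ν^2 + x^2)) * besselK ν x ≤ x * besselK (ν+1) x := by
  have ht := besselK_turan ν x hx
  have hr := besselK_rec ν x hx
  have ha : 0 < besselK ν x := besselK_pos _ _ hx
  have hb : 0 < besselK (ν+1) x := besselK_pos _ _ hx
  have hd : 0 < besselK (ν-1) x := besselK_pos _ _ hx
  set a := besselK ν x
  set b := besselK (ν+1) x
  set d := besselK (ν-1) x
  set S := Real.sqrt (ν^2 + x^2) with hS
  have hS0 : 0 ≤ S := Real.sqrt_nonneg _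
  have hS2 : S^2 = ν^2 + x^2 := Real.sq_sqrt (by positivity)
  have hSν : ν ≤ S := by
    rcases le_or_gt ν 0 with h | h
    · linarith
    · nlinarith
  have key : x * a^2 + 2*ν*a*b ≤ x * b^2 := by nlinarith [ht, hr]
  have key2 : S^2 * a^2 ≤ (x*b - ν*a)^2 := by nlinarith [key]
  rcases le_or_gt (S*a) (x*b - ν*a) with h | h
  · nlinarith
  · exfalso
    have h5 : S*a + (x*b - ν*a) ≤ 0 := by
      by_contra hcon
      push_neg at hcon
      nlinarith [mul_pos (sub_pos.2 h) hcon]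
    nlinarith [mul_pos hx hb, mul_nonneg hS0 ha.le, mul_le_mul_of_nonneg_left hSν ha.le]

lemma aux_lt_sqrt (b c : ℝ) (hc : 0 < c) : b < Real.sqrt (b^2 + c) := by
  rcases le_or_gt b 0 with h | h
  · have h0 : 0 < Real.sqrt (b^2+c) := Real.sqrt_pos.2 (by positivity)
    linarith
  · have h1 : Real.sqrt (b^2) < Real.sqrt (b^2 + c) :=
      Real.sqrt_lt_sqrt (sq_nonneg b) (by linarith)
    rwa [Real.sqrt_sq h.le] at h1

lemma aux_neg_lt_sqrt (b c : ℝ) (hc : 0 < c) : -b < Real.sqrt (b^2 + c) := by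
  have := aux_lt_sqrt (-b) c hc
  rwa [neg_sq] at this

lemma key_ineq (lam α β γ δ p u : ℝ) (hα : 0 < α) (hβ : 0 < β) (hγ : 0 < γ) (hδ : 0 < δ)
    (hγ2 : γ^2 = α^2 - β^2) (hp0 : 0 < p)
    (hpS : p ≤ (lam - 1/2) + Real.sqrt ((lam - 1/2)^2 + u^2))
    (hu2 : u^2 * α^2 = α^4 * δ^2 + β^2 * p^2) :
    p * γ^2 < α^2 * (lam + Real.sqrt (lam^2 + (δ*γ)^2)) := by
  set S := Real.sqrt ((lam - 1/2)^2 + u^2) with hS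
  set T := Real.sqrt (lam^2 + (δ*γ)^2) with hT
  set W := Real.sqrt ((lam - 1/2)^2 + (δ*γ)^2) with hW
  have hS2 : S^2 = (lam - 1/2)^2 + u^2 := Real.sq_sqrt (by positivity)
  have hT2 : T^2 = lam^2 + (δ*γ)^2 := Real.sq_sqrt (by positivity)
  have hW2 : W^2 = (lam - 1/2)^2 + (δ*γ)^2 := Real.sq_sqrt (by positivity)
  have hS0 : 0 ≤ S := Real.sqrt_nonneg _
  have hT0 : 0 ≤ T := Real.sqrt_nonneg _
  have hW0 : 0 ≤ W := Real.sqrt_nonneg _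
  have hδγ : 0 < (δ*γ)^2 := by positivity
  have hα2 : (0:ℝ) < α^2 := by positivity
  have hβ2 : (0:ℝ) < β^2 := by positivity
  have hTlam : lam < T := hT ▸ aux_lt_sqrt lam ((δ*γ)^2) hδγ
  have hTlam' : -lam < T := hT ▸ aux_neg_lt_sqrt lam ((δ*γ)^2) hδγ
  have hWm : (lam - 1/2) < W := hW ▸ aux_lt_sqrt (lam - 1/2) ((δ*γ)^2) hδγ
  have hWm' : -(lam - 1/2) < W := hW ▸ aux_neg_lt_sqrt (lam - 1/2) ((δ*γ)^2) hδγ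
  clear_value S T W
  clear hS hW hT
  have hlamT : 0 < lam + T := by linarith
  rcases le_or_gt p (lam - 1/2) with hpm | hpm
  · rcases le_or_gt (lam - 1/2) 0 with h2 | h2
    · have e1 : p * γ^2 ≤ 0 :=
        mul_nonpos_of_nonpos_of_nonneg (le_trans hpm h2) (sq_nonneg γ)
      have e2 : 0 < α^2*(lam+T) := mul_pos hα2 hlamT
      linarith
    · have h3 : p*γ^2 ≤ (lam - 1/2)*γ^2 := mul_le_mul_of_nonneg_right hpm (sq_nonneg γ)
      have h4 : (lam - 1/2)*γ^2 < (lam - 1/2)*α^2 :=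
        mul_lt_mul_of_pos_left (by linarith : γ^2 < α^2) h2
      have h5 : (lam - 1/2)*α^2 < (lam+T)*α^2 :=
        mul_lt_mul_of_pos_right (by linarith : lam - 1/2 < lam + T) hα2
      have h6 : 0 < α^2*(lam+T) - (lam+T)*α^2 + α^2*(lam+T) := by
        have := mul_pos hα2 hlamT; linarith
      linarith
  · -- quadratic regime
    have hq2 : p^2 - 2*(lam - 1/2)*p ≤ u^2 := by
      have e1 : p - (lam - 1/2) ≤ S := by linarith
      have e2 : 0 ≤ S + (p - (lam - 1/2)) := by linarith
      have e3 := mul_nonneg (sub_nonneg.2 e1) e2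
      have eid : (S - (p - (lam - 1/2)))*(S + (p - (lam - 1/2)))
          = S^2 - (p^2 - 2*(lam - 1/2)*p + (lam - 1/2)^2) := by ring
      linarith [e3, eid, hS2]
    have hquad : γ^2*p^2 ≤ 2*(lam - 1/2)*α^2*p + α^4*δ^2 := by
      have h3 := mul_le_mul_of_nonneg_right hq2 (sq_nonneg α)
      have h4 : γ^2*p^2 = α^2*p^2 - β^2*p^2 := by rw [hγ2]; ring
      have h3' : (p^2 - 2*(lam - 1/2)*p)*α^2
          = p^2*α^2 - 2*(lam - 1/2)*p*α^2 := by ring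
      linarith [h3, hu2, h4, h3']
    have hPstar : p*γ^2 ≤ α^2*((lam - 1/2) + W) := by
      by_contra hcon
      push_neg at hcon
      have h5' := mul_le_mul_of_nonneg_right hquad (sq_nonneg γ)
      have h5id : γ^2*p^2*γ^2 = (γ^2*p)^2 := by ring
      have h5 : (γ^2*p)^2 - 2*(lam - 1/2)*α^2*(γ^2*p) ≤ α^4*δ^2*γ^2 := by
        have h5id2 : (2*(lam - 1/2)*α^2*p + α^4*δ^2)*γ^2
            = 2*(lam - 1/2)*α^2*(γ^2*p) + α^4*δ^2*γ^2 := by ring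
        linarith [h5', h5id, h5id2]
      have h6 : 0 < γ^2*p - (lam - 1/2)*α^2 - α^2*W := by
        have : α^2*((lam - 1/2) + W) = (lam - 1/2)*α^2 + α^2*W := by ring
        linarith [hcon, this]
      have h7 : 0 < γ^2*p - (lam - 1/2)*α^2 + α^2*W := by
        linarith [mul_nonneg hα2.le hW0]
      have h8' : (α^2*W)^2 = α^4*(lam - 1/2)^2 + α^4*δ^2*γ^2 := by
        linear_combination (α^4)*hW2
      have h8 : (γ^2*p - (lam - 1/2)*α^2)^2 ≤ (α^2*W)^2 := by
        have hid3 : (γ^2*p - (lam - 1/2)*α^2)^2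
            = (γ^2*p)^2 - 2*(lam - 1/2)*α^2*(γ^2*p) + α^4*(lam - 1/2)^2 := by ring
        linarith [h5, h8', hid3]
      have h9 := mul_pos h6 h7
      have hid4 : (γ^2*p - (lam - 1/2)*α^2 - α^2*W)*(γ^2*p - (lam - 1/2)*α^2 + α^2*W)
          = (γ^2*p - (lam - 1/2)*α^2)^2 - (α^2*W)^2 := by ring
      linarith [h9, hid4, h8]
    have hmW : (lam - 1/2) + W < lam + T := by
      have hid : (lam + T - (lam - 1/2) - W)*(T+W) = (T+W+lam+(lam - 1/2))/2 := by
        linear_combination hT2 - hW2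
      by_contra hno
      push_neg at hno
      have e3 : lam + T - (lam - 1/2) - W ≤ 0 := by linarith
      have e4 : (0:ℝ) ≤ T + W := by linarith
      linarith [mul_nonpos_of_nonpos_of_nonneg e3 e4, hid]
    calc p*γ^2 ≤ α^2*((lam - 1/2)+W) := hPstar
      _ < α^2*(lam+T) := mul_lt_mul_of_pos_left hmW hα2

theorem stmt_8 (lam α β δ γ : ℝ) (hα : 0 < α) (hβ : 0 < β) (hβα : β < α) (hδ : 0 < δ)
    (hγ : γ = Real.sqrt (α ^ 2 - β ^ 2)) (x : ℝ)
    (hx : x / Real.sqrt (δ ^ 2 + x ^ 2) *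
        (besselK (lam - 3 / 2) (α * Real.sqrt (δ ^ 2 + x ^ 2)) /
          besselK (lam - 1 / 2) (α * Real.sqrt (δ ^ 2 + x ^ 2))) = β / α) :
    x < δ * β * besselK (lam + 1) (δ * γ) / (γ * besselK lam (δ * γ)) := by
  have hαβ2 : 0 < α^2 - β^2 := by nlinarith
  have hγ0 : 0 < γ := by
    rw [hγ]; exact Real.sqrt_pos.2 (by rw [show α^2 = α^2 from rfl] at hαβ2; exact_mod_cast hαβ2)
  have hγ2 : γ^2 = α^2 - β^2 := by rw [hγ]; exact Real.sq_sqrt hαβ2.le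
  set s := Real.sqrt (δ ^ 2 + x ^ 2) with hsdef
  have hs2 : s^2 = δ^2 + x^2 := Real.sq_sqrt (by positivity)
  have hs0 : 0 < s := Real.sqrt_pos.2 (by positivity)
  have hu : 0 < α * s := mul_pos hα hs0
  have hA : 0 < besselK (lam - 3/2) (α * s) := besselK_pos _ _ hu
  have hB : 0 < besselK (lam - 1/2) (α * s) := besselK_pos _ _ hu
  have hg : 0 < δ * γ := mul_pos hδ hγ0
  have hC : 0 < besselK lam (δ * γ) := besselK_pos _ _ hg
  have hD : 0 < besselK (lam + 1) (δ * γ) := besselK_pos _ _ hg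
  have hup := besselK_ratio_upper (lam - 3/2) (α * s) hu
  rw [show lam - 3/2 + 1 = lam - 1/2 from by ring] at hup
  have hlow := besselK_ratio_lower lam (δ * γ) hg
  set A := besselK (lam - 3/2) (α * s) with hAdef
  set B := besselK (lam - 1/2) (α * s) with hBdef
  clear_value A B
  set p := α * s * B / A with hpdef
  clear_value p
  have hp0 : 0 < p := by rw [hpdef]; exact div_pos (mul_pos hu hB) hA
  have hpS : p ≤ (lam - 1/2) + Real.sqrt ((lam - 1/2)^2 + (α*s)^2) := by
    rw [hpdef, div_le_iff₀ hA]
    exact hup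
  have hxp : x * α^2 = β * p := by
    rw [hpdef]
    field_simp [hs0.ne', hB.ne', hα.ne', hA.ne'] at hx ⊢
    linear_combination hx
  have hu2 : (α*s)^2 * α^2 = α^4 * δ^2 + β^2 * p^2 := by
    have hss : (α*s)^2 = α^2*δ^2 + α^2*x^2 := by rw [mul_pow, hs2]; ring
    linear_combination α^2 * hss + (x*α^2 + β*p) * hxp
  have hkey := key_ineq lam α β γ δ p (α*s) hα hβ hγ0 hδ hγ2 hp0 hpS hu2
  rw [lt_div_iff₀ (mul_pos hγ0 hC)]
  have h1 : x * (γ * besselK lam (δ*γ)) * (α^2 * γ) = β * (p * γ^2) * besselK lam (δ*γ) := by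
    linear_combination (γ^2 * besselK lam (δ*γ)) * hxp
  have h2 : β * (p * γ^2) * besselK lam (δ*γ)
      < β * (α^2 * (lam + Real.sqrt (lam^2 + (δ*γ)^2))) * besselK lam (δ*γ) :=
    mul_lt_mul_of_pos_right (mul_lt_mul_of_pos_left hkey hβ) hC
  have h3 : β * α^2 * ((lam + Real.sqrt (lam^2 + (δ*γ)^2)) * besselK lam (δ*γ))
      ≤ β * α^2 * (δ*γ * besselK (lam + 1) (δ*γ)) :=
    mul_le_mul_of_nonneg_left hlow (by positivity)
  have h4 : x * (γ * besselK lam (δ*γ)) * (α^2 * γ)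
      < δ * β * besselK (lam + 1) (δ*γ) * (α^2 * γ) := by
    calc x * (γ * besselK lam (δ*γ)) * (α^2 * γ)
        = β * (p * γ^2) * besselK lam (δ*γ) := h1
      _ < β * (α^2 * (lam + Real.sqrt (lam^2 + (δ*γ)^2))) * besselK lam (δ*γ) := h2
      _ = β * α^2 * ((lam + Real.sqrt (lam^2 + (δ*γ)^2)) * besselK lam (δ*γ)) := by ring
      _ ≤ β * α^2 * (δ*γ * besselK (lam + 1) (δ*γ)) := h3
      _ = δ * β * besselK (lam + 1) (δ*γ) * (α^2 * γ) := by ring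
  exact lt_of_mul_lt_mul_right h4 (by positivity)
end

section
/- Let α > 0 and 0 < β < α. Then x = β/(α(α − β)) is a strictly positive solution of the equation K_{1/2}(αx)/K_{3/2}(αx) = β/α; that is, the mode of the variance-gamma distribution VG₂(λ, α, β, 0) with λ = 2 equals β/(α(α − β)). -/
open Real MeasureTheory Set Filter ENNReal

lemma cosh_le_exp_abs (u : ℝ) : Real.cosh u ≤ Real.exp |u| := by
  rw [Real.cosh_eq]
  have h1 : Real.exp u ≤ Real.exp |u| := Real.exp_le_exp.2 (le_abs_self u)
  have h2 : Real.exp (-u) ≤ Real.exp |u| := Real.exp_le_exp.2 (neg_le_abs u)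
  linarith

lemma one_add_sq_half_le_cosh (t : ℝ) (ht : 0 ≤ t) : 1 + t^2/2 ≤ Real.cosh t := by
  have h : Real.cosh t = Real.cosh (t/2)^2 + Real.sinh (t/2)^2 := by
    have := Real.cosh_two_mul (t/2)
    rw [show 2*(t/2) = t by ring] at this
    linarith
  have hs : Real.cosh (t/2)^2 = Real.sinh (t/2)^2 + 1 := Real.cosh_sq (t/2)
  have h2 : t/2 ≤ Real.sinh (t/2) := (Real.self_le_sinh_iff).2 (by linarith)
  have h3 : (t/2)^2 ≤ Real.sinh (t/2)^2 := by
    have := sq_le_sq' (by nlinarith) h2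
    simpa using this
  nlinarith

lemma integrableBessel (x ν : ℝ) (hx : 0 < x) :
    IntegrableOn (fun t => Real.exp (-x * Real.cosh t) * Real.cosh (ν * t)) (Set.Ioi 0) := by
  have hmeas : AEStronglyMeasurable (fun t => Real.exp (-x * Real.cosh t) * Real.cosh (ν * t))
      (volume.restrict (Set.Ioi (0:ℝ))) := by
    apply Continuous.aestronglyMeasurable
    continuity
  set c : ℝ := |ν| / x with hc
  have hg : Integrable (fun t : ℝ => Real.exp (-x + ν^2/(2*x)) * Real.exp (-(x/2) * (t - c)^2)) := by
    exact ((integrable_exp_neg_mul_sq (by positivity : (0:ℝ) < x/2)).comp_sub_right c).const_mul _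
  refine (hg.integrableOn).mono' hmeas ?_
  filter_upwards [ae_restrict_mem measurableSet_Ioi] with t ht
  simp only [Set.mem_Ioi] at ht
  have h1 : Real.cosh (ν * t) ≤ Real.exp (|ν| * t) := by
    have := cosh_le_exp_abs (ν * t)
    rwa [abs_mul, abs_of_pos ht] at this
  have h2 : Real.exp (-x * Real.cosh t) ≤ Real.exp (-x * (1 + t^2/2)) := by
    apply Real.exp_le_exp.2
    have := one_add_sq_half_le_cosh t ht.le
    nlinarith
  have hpos1 : 0 < Real.exp (-x * Real.cosh t) := Real.exp_pos _
  have hpos2 : 0 < Real.cosh (ν * t) := Real.cosh_pos (ν * t)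
  rw [Real.norm_eq_abs, abs_of_pos (by positivity)]
  calc Real.exp (-x * Real.cosh t) * Real.cosh (ν * t)
      ≤ Real.exp (-x * (1 + t^2/2)) * Real.exp (|ν| * t) := by
        apply mul_le_mul h2 h1 hpos2.le (Real.exp_pos _).le
    _ = Real.exp (-x + ν^2/(2*x)) * Real.exp (-(x/2) * (t - c)^2) := by
        rw [← Real.exp_add, ← Real.exp_add]
        congr 1
        have hx' : x ≠ 0 := hx.ne'
        have habs : |ν|^2 = ν^2 := sq_abs ν
        rw [hc]
        field_simp
        rw [← habs]
        ring

lemma bessel_key (x : ℝ) (hx : 0 < x) :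
    (x + 1) * besselK (1/2) x = x * besselK (3/2) x := by
  have hI1 := integrableBessel x (1/2) hx
  have hI2 := integrableBessel x (3/2) hx
  -- F t = exp(-x cosh t) * 2 sinh(t/2)
  set F : ℝ → ℝ := fun t => Real.exp (-x * Real.cosh t) * (2 * Real.sinh (t/2)) with hF
  have hderiv : ∀ t : ℝ, HasDerivAt F
      ((x+1) * (Real.exp (-x * Real.cosh t) * Real.cosh ((1/2)*t))
        - x * (Real.exp (-x * Real.cosh t) * Real.cosh ((3/2)*t))) t := by
    intro t
    have h1 : HasDerivAt (fun t => Real.exp (-x * Real.cosh t))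
        (Real.exp (-x * Real.cosh t) * (-x * Real.sinh t)) t := by
      have : HasDerivAt (fun t : ℝ => -x * Real.cosh t) (-x * Real.sinh t) t :=
        (Real.hasDerivAt_cosh t).const_mul (-x)
      exact this.exp
    have h2 : HasDerivAt (fun t : ℝ => 2 * Real.sinh (t/2)) (Real.cosh (t/2)) t := by
      have hd : HasDerivAt (fun t : ℝ => t/2) (1/2) t := by
        simpa using (hasDerivAt_id t).div_const 2
      have := (Real.hasDerivAt_sinh (t/2)).comp t hd
      have h' := this.const_mul 2
      refine h'.congr_deriv ?_
      ring
    have := h1.mul h2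
    refine this.congr_deriv (Eq.symm ?_)
    have key : Real.sinh t * Real.sinh (t/2) = (Real.cosh (3*t/2) - Real.cosh (t/2)) / 2 := by
      have e1 : Real.cosh (3*t/2) = Real.cosh (t + t/2) := by ring_nf
      have e2 : Real.cosh (t/2) = Real.cosh (t - t/2) := by ring_nf
      rw [e1, e2, Real.cosh_add, Real.cosh_sub]
      ring
    have e3 : (3:ℝ)/2 * t = 3*t/2 := by ring
    have e4 : (1:ℝ)/2 * t = t/2 := by ring
    rw [e3, e4]
    linear_combination (2*x*Real.exp (-x * Real.cosh t)) * key
  have hF0 : F 0 = 0 := by simp [hF]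
  have htend : Tendsto F atTop (nhds 0) := by
    have hub : ∀ᶠ t in atTop, F t ≤ Real.exp (-x) * Real.exp (-(x/2)*t^2 + t) := by
      filter_upwards [eventually_ge_atTop (0:ℝ)] with t ht
      have h1 : 2 * Real.sinh (t/2) ≤ Real.exp t := by
        have : 2 * Real.sinh (t/2) = Real.exp (t/2) - Real.exp (-(t/2)) := by
          rw [Real.sinh_eq]; ring
        have := Real.exp_pos (-(t/2))
        have h' : Real.exp (t/2) ≤ Real.exp t := Real.exp_le_exp.2 (by linarith)
        linarith
      have h2 : Real.exp (-x * Real.cosh t) ≤ Real.exp (-x - (x/2)*t^2) := by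
        apply Real.exp_le_exp.2
        have := one_add_sq_half_le_cosh t ht
        nlinarith
      calc F t ≤ Real.exp (-x - (x/2)*t^2) * Real.exp t := by
            apply mul_le_mul h2 h1 ?_ (Real.exp_pos _).le
            have : 0 ≤ Real.sinh (t/2) := Real.sinh_nonneg_iff.2 (by linarith)
            linarith
        _ = Real.exp (-x) * Real.exp (-(x/2)*t^2 + t) := by
            rw [← Real.exp_add, ← Real.exp_add]; ring_nf
    have hlb : ∀ᶠ t in atTop, 0 ≤ F t := by
      filter_upwards [eventually_ge_atTop (0:ℝ)] with t ht
      have : 0 ≤ Real.sinh (t/2) := Real.sinh_nonneg_iff.2 (by linarith)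
      positivity
    have hexp : Tendsto (fun t : ℝ => Real.exp (-x) * Real.exp (-(x/2)*t^2 + t)) atTop (nhds 0) := by
      rw [show (0:ℝ) = Real.exp (-x) * 0 by ring]
      apply Filter.Tendsto.const_mul
      apply Real.tendsto_exp_atBot.comp
      have : ∀ t : ℝ, -(x/2)*t^2 + t = t * (1 - (x/2)*t) := by intro t; ring
      simp_rw [this]
      apply Tendsto.atTop_mul_atBot₀ tendsto_id
      have hneg : Tendsto (fun t : ℝ => -(x/2 * t)) atTop atBot :=
        tendsto_neg_atTop_atBot.comp (tendsto_id.const_mul_atTop (by positivity : (0:ℝ) < x/2))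
      have := tendsto_atBot_add_const_left atTop 1 hneg
      simpa [sub_eq_add_neg, mul_comm] using this
    exact squeeze_zero' hlb hub hexp
  have hint : IntegrableOn (fun t =>
      (x+1) * (Real.exp (-x * Real.cosh t) * Real.cosh ((1/2)*t))
        - x * (Real.exp (-x * Real.cosh t) * Real.cosh ((3/2)*t))) (Set.Ioi 0) := by
    exact (hI1.const_mul _).sub (hI2.const_mul _)
  have := integral_Ioi_of_hasDerivAt_of_tendsto
    (f := F) (a := 0) (hderiv 0).continuousAt.continuousWithinAt
    (fun t _ => hderiv t) hint htend
  rw [hF0, sub_zero] at this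
  have hsplit : ∫ t in Set.Ioi (0:ℝ),
      ((x+1) * (Real.exp (-x * Real.cosh t) * Real.cosh ((1/2)*t))
        - x * (Real.exp (-x * Real.cosh t) * Real.cosh ((3/2)*t)))
      = (x+1) * besselK (1/2) x - x * besselK (3/2) x := by
    rw [integral_sub (hI1.const_mul _) (hI2.const_mul _),
      integral_const_mul, integral_const_mul]
    rfl
  rw [hsplit] at this
  linarith

lemma bessel_pos (x : ℝ) (hx : 0 < x) : 0 < besselK (3/2) x := by
  have hI := integrableBessel x (3/2) hx
  rw [besselK]
  have hnn : 0 ≤ᵐ[volume.restrict (Set.Ioi (0:ℝ))]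
      (fun t => Real.exp (-x * Real.cosh t) * Real.cosh ((3/2) * t)) := by
    filter_upwards with t
    have := Real.cosh_pos ((3/2)*t)
    positivity
  rw [setIntegral_pos_iff_support_of_nonneg_ae hnn hI]
  have : Set.Ioi (0:ℝ) ⊆ Function.support (fun t => Real.exp (-x * Real.cosh t) * Real.cosh ((3/2) * t)) ∩ Set.Ioi 0 := by
    intro t ht
    refine ⟨?_, ht⟩
    simp only [Function.mem_support]
    have := Real.cosh_pos ((3/2)*t)
    positivity
  calc (0:ℝ≥0∞) < volume (Set.Ioi (0:ℝ)) := by simp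
    _ ≤ _ := measure_mono this

theorem stmt_12 (α β : ℝ) (hα : 0 < α) (hβ : 0 < β) (hβα : β < α) :
    0 < β / (α * (α - β)) ∧
    besselK (1 / 2) (α * (β / (α * (α - β)))) /
      besselK (3 / 2) (α * (β / (α * (α - β)))) = β / α := by
  have hab : 0 < α - β := by linarith
  constructor
  · positivity
  · set x : ℝ := α * (β / (α * (α - β))) with hxdef
    have hx : x = β / (α - β) := by
      rw [hxdef]
      field_simp
    have hxpos : 0 < x := by rw [hx]; positivity
    have hkey := bessel_key x hxpos
    have hpos := bessel_pos x hxpos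
    have hratio : besselK (1/2) x / besselK (3/2) x = x / (x + 1) := by
      rw [div_eq_div_iff hpos.ne' (by positivity : (x:ℝ) + 1 ≠ 0)]
      linarith [hkey]
    rw [hratio, div_eq_div_iff (by positivity : (x:ℝ) + 1 ≠ 0) hα.ne', hx]
    field_simp
    ring
end

section
/- Let α > 0, 0 < β < α, δ > 0, and set γ = √(α² − β²). Then x = (β/γ²)·[1 + √(β²/α² + δ²γ²)] satisfies the equation (x/√(δ² + x²)) · K_{1/2}(α√(δ² + x²)) / K_{3/2}(α√(δ² + x²)) = β/α; that is, the mode of the generalized hyperbolic distribution GH(2, α, β, δ, 0) equals (β/γ²)·[1 + √(β²/α² + δ²γ²)]. -/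
open Real MeasureTheory

lemma image_sinh_half : (fun t => Real.sinh (t / 2)) '' Set.Ioi (0:ℝ) = Set.Ioi 0 := by
  ext y
  constructor
  · rintro ⟨t, ht, rfl⟩
    exact Real.sinh_pos_iff.2 (by simpa using Set.mem_Ioi.1 ht |> half_pos)
  · intro hy
    exact ⟨2 * Real.arsinh y, by simpa using Real.arsinh_pos_iff.2 hy, by
      simp [Real.sinh_arsinh]⟩

lemma subst_sinh_half (g : ℝ → ℝ) :
    ∫ u in Set.Ioi (0:ℝ), g u
      = ∫ t in Set.Ioi (0:ℝ), (Real.cosh (t / 2) / 2) * g (Real.sinh (t / 2)) := by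
  have hderiv : ∀ t ∈ Set.Ioi (0:ℝ),
      HasDerivWithinAt (fun t => Real.sinh (t / 2)) (Real.cosh (t / 2) / 2) (Set.Ioi 0) t := by
    intro t _
    have := ((hasDerivAt_id t).div_const 2).sinh
    simpa [div_eq_mul_inv, mul_comm] using this.hasDerivWithinAt
  have hinj : Set.InjOn (fun t => Real.sinh (t / 2)) (Set.Ioi 0) := by
    have : StrictMono fun t => Real.sinh (t / 2) := fun a b h =>
      Real.sinh_lt_sinh.2 (by linarith)
    exact this.injective.injOn
  have := integral_image_eq_integral_abs_deriv_smul measurableSet_Ioi hderiv hinj g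
  rw [image_sinh_half] at this
  rw [this]
  refine setIntegral_congr_fun measurableSet_Ioi (fun t _ => ?_)
  rw [abs_of_pos (by positivity : (0:ℝ) < Real.cosh (t/2) / 2), smul_eq_mul]

lemma coshEqSinhHalf (t : ℝ) : Real.cosh t = 1 + 2 * Real.sinh (t / 2) ^ 2 := by
  have h := Real.cosh_two_mul (t / 2)
  have h2 := Real.cosh_sq (t / 2)
  have : (2:ℝ) * (t / 2) = t := by ring
  rw [this] at h
  linarith

lemma besselK_half {x : ℝ} (hx : 0 < x) :
    besselK (1 / 2) x = Real.sqrt (π / (2 * x)) * Real.exp (-x) := by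
  have key : besselK (1 / 2) x
      = ∫ u in Set.Ioi (0:ℝ), 2 * (Real.exp (-x) * Real.exp (-(2 * x) * u ^ 2)) := by
    rw [subst_sinh_half (fun u => 2 * (Real.exp (-x) * Real.exp (-(2 * x) * u ^ 2)))]
    refine setIntegral_congr_fun measurableSet_Ioi (fun t _ => ?_)
    rw [coshEqSinhHalf t, ← Real.exp_add]
    have : (1:ℝ)/2 * t = t / 2 := by ring
    rw [this]
    ring_nf
  rw [key, MeasureTheory.integral_const_mul, MeasureTheory.integral_const_mul,
    integral_gaussian_Ioi (2 * x)]
  ring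

lemma gauss_sq_int {b : ℝ} (hb : 0 < b) :
    ∫ u in Set.Ioi (0:ℝ), u ^ 2 * Real.exp (-b * u ^ 2)
      = Real.sqrt π / 4 * b ^ (-(3:ℝ)/2) := by
  have h := integral_rpow_mul_exp_neg_mul_rpow (p := 2) (q := 2) (b := b)
    two_pos (by norm_num) hb
  have hconv : ∫ u in Set.Ioi (0:ℝ), u ^ 2 * Real.exp (-b * u ^ 2)
      = ∫ u in Set.Ioi (0:ℝ), u ^ (2:ℝ) * Real.exp (-b * u ^ (2:ℝ)) := by
    refine setIntegral_congr_fun measurableSet_Ioi (fun u hu => ?_)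
    rw [show (2:ℝ) = ((2:ℕ):ℝ) by norm_num, Real.rpow_natCast]
  rw [hconv, h]
  have : ((2:ℝ) + 1) / 2 = 1 / 2 + 1 := by norm_num
  rw [show -((2:ℝ)+1)/2 = -(3:ℝ)/2 by norm_num, this, Real.Gamma_add_one (by norm_num),
    Real.Gamma_one_half_eq]
  ring

lemma besselK_threehalf {x : ℝ} (hx : 0 < x) :
    besselK (3 / 2) x = Real.sqrt (π / (2 * x)) * (1 + 1 / x) * Real.exp (-x) := by
  have key : besselK (3 / 2) x
      = ∫ u in Set.Ioi (0:ℝ), 2 * Real.exp (-x) *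
          ((1 + 4 * u ^ 2) * Real.exp (-(2 * x) * u ^ 2)) := by
    rw [subst_sinh_half (fun u => 2 * Real.exp (-x) *
      ((1 + 4 * u ^ 2) * Real.exp (-(2 * x) * u ^ 2)))]
    refine setIntegral_congr_fun measurableSet_Ioi (fun t _ => ?_)
    have h3 : (3:ℝ)/2 * t = 3 * (t / 2) := by ring
    rw [h3, Real.cosh_three_mul, coshEqSinhHalf t,
      show -x * (1 + 2 * Real.sinh (t/2) ^ 2) = -x + -(2*x) * Real.sinh (t/2) ^ 2 by ring,
      Real.exp_add]
    have hc := Real.cosh_sq (t / 2)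
    have : Real.cosh (t/2) ^ 3 = Real.cosh (t/2) * (Real.sinh (t/2)^2 + 1) := by
      rw [← hc]; ring
    rw [this]
    ring_nf
  have hint1 : IntegrableOn (fun u : ℝ => Real.exp (-(2 * x) * u ^ 2)) (Set.Ioi 0) :=
    (integrable_exp_neg_mul_sq (by linarith)).integrableOn
  have hint2 : IntegrableOn (fun u : ℝ => u ^ 2 * Real.exp (-(2 * x) * u ^ 2)) (Set.Ioi 0) := by
    have := integrableOn_rpow_mul_exp_neg_mul_rpow (p := 2) (s := 2) (b := 2 * x)
      (by norm_num) (by norm_num) (by linarith)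
    refine this.congr_fun (fun u hu => ?_) measurableSet_Ioi
    beta_reduce
    rw [show (2:ℝ) = ((2:ℕ):ℝ) by norm_num, Real.rpow_natCast]
  have hsplit : ∫ u in Set.Ioi (0:ℝ), (1 + 4 * u ^ 2) * Real.exp (-(2 * x) * u ^ 2)
      = (∫ u in Set.Ioi (0:ℝ), Real.exp (-(2 * x) * u ^ 2))
        + 4 * ∫ u in Set.Ioi (0:ℝ), u ^ 2 * Real.exp (-(2 * x) * u ^ 2) := by
    rw [← MeasureTheory.integral_const_mul, ← MeasureTheory.integral_add hint1
      (hint2.const_mul 4)]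
    refine setIntegral_congr_fun measurableSet_Ioi (fun u _ => ?_)
    ring
  rw [key, MeasureTheory.integral_const_mul, hsplit, integral_gaussian_Ioi,
    gauss_sq_int (by linarith : (0:ℝ) < 2 * x)]
  have h2x : (0:ℝ) < 2 * x := by linarith
  have hrpow : (2 * x) ^ (-(3:ℝ)/2) = ((2 * x) * Real.sqrt (2 * x))⁻¹ := by
    rw [show (-(3:ℝ)/2) = -(1 + 1/2) by norm_num, Real.rpow_neg h2x.le,
      Real.rpow_add h2x, Real.rpow_one, Real.sqrt_eq_rpow]
  have h1 : Real.sqrt (π / (2 * x)) = Real.sqrt π / Real.sqrt (2 * x) :=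
    Real.sqrt_div pi_pos.le _
  have hss : Real.sqrt (2 * x) ^ 2 = 2 * x := Real.sq_sqrt h2x.le
  have hsne : Real.sqrt (2 * x) ≠ 0 := by positivity
  rw [hrpow, h1]
  have hxne : x ≠ 0 := ne_of_gt hx
  field_simp

theorem stmt_13 (α β δ γ : ℝ) (hα : 0 < α) (hβ : 0 < β) (hβα : β < α) (hδ : 0 < δ)
    (hγ : γ = Real.sqrt (α ^ 2 - β ^ 2)) :
    β / γ ^ 2 * (1 + Real.sqrt (β ^ 2 / α ^ 2 + δ ^ 2 * γ ^ 2)) /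
        Real.sqrt (δ ^ 2 + (β / γ ^ 2 * (1 + Real.sqrt (β ^ 2 / α ^ 2 + δ ^ 2 * γ ^ 2))) ^ 2) *
      (besselK (1 / 2) (α * Real.sqrt (δ ^ 2 +
          (β / γ ^ 2 * (1 + Real.sqrt (β ^ 2 / α ^ 2 + δ ^ 2 * γ ^ 2))) ^ 2)) /
        besselK (3 / 2) (α * Real.sqrt (δ ^ 2 +
          (β / γ ^ 2 * (1 + Real.sqrt (β ^ 2 / α ^ 2 + δ ^ 2 * γ ^ 2))) ^ 2))) = β / α := by
  have hγ2 : γ ^ 2 = α ^ 2 - β ^ 2 := by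
    rw [hγ, Real.sq_sqrt (by nlinarith)]
  have hγ2pos : 0 < γ ^ 2 := by nlinarith
  set R := Real.sqrt (β ^ 2 / α ^ 2 + δ ^ 2 * γ ^ 2) with hRdef
  have hR0 : 0 ≤ R := Real.sqrt_nonneg _
  have hRsq : R ^ 2 = β ^ 2 / α ^ 2 + δ ^ 2 * γ ^ 2 := Real.sq_sqrt (by positivity)
  have hRsq' : α ^ 2 * R ^ 2 = β ^ 2 + α ^ 2 * (δ ^ 2 * γ ^ 2) := by
    rw [hRsq]
    field_simp
  set X := β / γ ^ 2 * (1 + R) with hXdef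
  have hX : 0 < X := mul_pos (div_pos hβ hγ2pos) (by linarith)
  set S := Real.sqrt (δ ^ 2 + X ^ 2) with hSdef
  have hS : 0 < S := Real.sqrt_pos.2 (by positivity)
  have hNpos : 0 < β ^ 2 + α ^ 2 * R := by positivity
  have hSval : S = (β ^ 2 + α ^ 2 * R) / (α * γ ^ 2) := by
    rw [hSdef, show δ ^ 2 + X ^ 2 = ((β ^ 2 + α ^ 2 * R) / (α * γ ^ 2)) ^ 2 from ?_,
      Real.sqrt_sq (by positivity)]
    rw [hXdef]
    have hγ0 : γ ≠ 0 := by rintro rfl; simp at hγ2pos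
    field_simp
    linear_combination (β ^ 2 - α ^ 2) * hRsq' + α ^ 2 * δ ^ 2 * γ ^ 2 * hγ2
  have hxpos : 0 < α * S := by positivity
  rw [besselK_half hxpos, besselK_threehalf hxpos]
  have h1 : (0:ℝ) < Real.sqrt (π / (2 * (α * S))) := Real.sqrt_pos.2 (by positivity)
  have hratio : Real.sqrt (π / (2 * (α * S))) * Real.exp (-(α * S)) /
      (Real.sqrt (π / (2 * (α * S))) * (1 + 1 / (α * S)) * Real.exp (-(α * S)))
      = (α * S) / (α * S + 1) := by
    have he := (Real.exp_pos (-(α * S))).ne'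
    field_simp
  rw [hratio]
  have hγne : γ ≠ 0 := by
    intro h
    rw [h] at hγ2pos
    simp at hγ2pos
  have hR1 : (1:ℝ) + R ≠ 0 := by positivity
  have hαS1 : α * S + 1 = α ^ 2 * (1 + R) / γ ^ 2 := by
    rw [hSval]
    field_simp
    linear_combination hγ2
  rw [hαS1, hSval, hXdef]
  field_simp
end

section
/- Let m > 0, b > 0 and c > 1. If x > 0 satisfies I_m(x/b)/I_{m−1}(x/b) = 1/c (the mode equation of the McKay Type I distribution with parameters m, b, c), then (2m − 1)bc/(c² − 1) < x < (bc/(c² − 1))·[m − 1/2 + √((m + 1/2)² − 2m/c²)] < 2mbc/(c² − 1). -/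
open Real MeasureTheory

/-- Modified Bessel function of the first kind. -/
noncomputable def besselI (ν x : ℝ) : ℝ :=
  ∑' k : ℕ, (x / 2) ^ (ν + 2 * (k : ℝ)) / (Real.Gamma (ν + (k : ℝ) + 1) * (k.factorial : ℝ))

section McKayAux

open Finset Polynomial


noncomputable def co (ν : ℝ) (k : ℕ) : ℝ := 1 / (Real.Gamma (ν + k + 1) * k.factorial)

noncomputable def SS (μ ν : ℝ) (K : ℕ) : ℝ := ∑ p ∈ antidiagonal K, co μ p.1 * co ν p.2

lemma co_pos {ν : ℝ} (hν : -1 < ν) (k : ℕ) : 0 < co ν k := by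
  have h : (0:ℝ) < ν + k + 1 := by
    have : (0:ℝ) ≤ k := Nat.cast_nonneg k
    linarith
  have := Real.Gamma_pos_of_pos h
  have : (0:ℝ) < k.factorial := by exact_mod_cast k.factorial_pos
  unfold co; positivity

lemma co_succ {ν : ℝ} (hν : -1 < ν) (k : ℕ) :
    co ν (k + 1) = co ν k / ((ν + k + 1) * (k + 1)) := by
  have h : (0:ℝ) < ν + k + 1 := by
    have : (0:ℝ) ≤ k := Nat.cast_nonneg k
    linarith
  unfold co
  have h1 : ν + (k + 1 : ℕ) + 1 = (ν + k + 1) + 1 := by push_cast; ring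
  rw [h1, Real.Gamma_add_one (ne_of_gt h), Nat.factorial_succ]
  have hg := (Real.Gamma_pos_of_pos h).ne'
  have hf : ((k.factorial : ℝ)) ≠ 0 := by exact_mod_cast k.factorial_pos.ne'
  field_simp
  push_cast
  ring

lemma summable_co {ν : ℝ} (hν : -1 < ν) (u : ℝ) :
    Summable (fun k : ℕ => u ^ k * co ν k) := by
  apply summable_of_ratio_norm_eventually_le (r := 1/2) (by norm_num)
  filter_upwards [Filter.eventually_atTop.mpr ⟨Nat.ceil (2 * |u|), fun n hn => hn⟩] with n hn
  have hcu : 2 * |u| ≤ n := le_trans (Nat.le_ceil _) (by exact_mod_cast hn)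
  have hpos : (0:ℝ) < ν + n + 1 := by
    have : (0:ℝ) ≤ n := Nat.cast_nonneg n
    linarith
  rw [co_succ hν]
  have hco := co_pos hν n
  have habs : ‖u ^ (n+1) * (co ν n / ((ν + n + 1) * (n + 1)))‖
      = |u| ^ (n+1) * (co ν n / ((ν + n + 1) * (n + 1))) := by
    rw [norm_mul, norm_pow, Real.norm_eq_abs, Real.norm_eq_abs, abs_of_pos
      (div_pos hco (mul_pos hpos (by positivity)))]
  rw [habs, norm_mul, norm_pow, Real.norm_eq_abs, Real.norm_eq_abs, abs_of_pos hco]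
  have hn1 : (1:ℝ) ≤ (n:ℝ) + 1 := by
    have : (0:ℝ) ≤ n := Nat.cast_nonneg n
    linarith
  have key : |u| / ((ν + n + 1) * (n + 1)) ≤ 1 / 2 := by
    rw [div_le_div_iff₀ (by positivity) (by norm_num)]
    nlinarith [abs_nonneg u]
  calc |u| ^ (n+1) * (co ν n / ((ν + n + 1) * (n + 1)))
      = (|u| / ((ν + n + 1) * (n + 1))) * (|u| ^ n * co ν n) := by ring
    _ ≤ (1/2) * (|u| ^ n * co ν n) := by
        apply mul_le_mul_of_nonneg_right key (by positivity)

lemma besselI_eq (ν : ℝ) {t : ℝ} (ht : 0 < t) :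
    besselI ν t = (t/2) ^ ν * ∑' k : ℕ, ((t/2)^2) ^ k * co ν k := by
  unfold besselI co
  rw [← tsum_mul_left]
  congr 1; funext k
  have hw : (0:ℝ) < t/2 := by linarith
  rw [Real.rpow_add hw]
  have h2 : (t/2) ^ (2 * (k:ℝ)) = ((t/2)^2) ^ k := by
    rw [show (2 * (k:ℝ)) = ((2 * k : ℕ) : ℝ) by push_cast; ring, Real.rpow_natCast, pow_mul]
  rw [h2]
  ring

lemma gamma_prod (y : ℝ) (hy : 0 < y) (n : ℕ) :
    Real.Gamma (y + n) = (∏ i ∈ range n, (y + i)) * Real.Gamma y := by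
  induction n with
  | zero => simp
  | succ n ih =>
    have h1 : y + ((n+1 : ℕ) : ℝ) = (y + n) + 1 := by push_cast; ring
    have h2 : (0:ℝ) < y + n := by
      have : (0:ℝ) ≤ n := Nat.cast_nonneg n
      linarith
    rw [h1, Real.Gamma_add_one h2.ne', ih, prod_range_succ]
    push_cast
    ring

lemma asc_eval_prod (r : ℝ) (n : ℕ) :
    (ascPochhammer ℝ n).eval r = ∏ i ∈ range n, (r + i) := by
  induction n with
  | zero => simp
  | succ n ih => rw [ascPochhammer_succ_eval, ih, prod_range_succ]

lemma ring_choose_eq (r : ℝ) (n : ℕ) :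
    Ring.choose r n = (∏ i ∈ range n, (r - n + 1 + i)) / n.factorial := by
  have h := Ring.descPochhammer_eq_factorial_smul_choose r n
  rw [descPochhammer_smeval_eq_ascPochhammer, ascPochhammer_smeval_eq_eval,
    asc_eval_prod] at h
  have hf : ((n.factorial : ℝ)) ≠ 0 := by exact_mod_cast n.factorial_pos.ne'
  rw [h, nsmul_eq_mul]
  field_simp

lemma choose_gamma {μ : ℝ} (hμ : -1 < μ) {j k : ℕ} (hj : j ≤ k) :
    Ring.choose (μ + k) (k - j) =
      Real.Gamma (μ + k + 1) / (Real.Gamma (μ + j + 1) * (k - j).factorial) := by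
  have hpos : (0:ℝ) < μ + j + 1 := by
    have : (0:ℝ) ≤ j := Nat.cast_nonneg j
    linarith
  rw [ring_choose_eq]
  have hcast : ((k - j : ℕ) : ℝ) = (k : ℝ) - j := by
    exact Nat.cast_sub hj
  have hprod : (∏ i ∈ range (k-j), (μ + k - (k-j : ℕ) + 1 + i))
      = ∏ i ∈ range (k-j), (μ + j + 1 + i) := by
    refine Finset.prod_congr rfl fun i _ => ?_
    rw [hcast]; ring
  rw [hprod]
  have hg : Real.Gamma (μ + j + 1 + (k - j : ℕ))
      = (∏ i ∈ range (k-j), (μ + j + 1 + i)) * Real.Gamma (μ + j + 1) :=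
    gamma_prod _ hpos _
  have harg : μ + j + 1 + ((k - j : ℕ) : ℝ) = μ + k + 1 := by rw [hcast]; ring
  rw [harg] at hg
  have hgj := (Real.Gamma_pos_of_pos hpos).ne'
  rw [hg]
  have hf : (((k-j).factorial : ℝ)) ≠ 0 := by exact_mod_cast (k-j).factorial_pos.ne'
  field_simp

lemma SS_eq {μ ν : ℝ} (hμ : -1 < μ) (hν : -1 < ν) {K : ℕ} (hK : (0:ℝ) < μ + ν + K + 1) :
    SS μ ν K = Real.Gamma (μ + ν + 2*K + 1) /
      (K.factorial * Real.Gamma (μ + K + 1) * Real.Gamma (ν + K + 1)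
        * Real.Gamma (μ + ν + K + 1)) := by
  have hKr : (0:ℝ) ≤ K := Nat.cast_nonneg K
  have hgμ : (0:ℝ) < Real.Gamma (μ + K + 1) := Real.Gamma_pos_of_pos (by linarith)
  have hgν : (0:ℝ) < Real.Gamma (ν + K + 1) := Real.Gamma_pos_of_pos (by linarith)
  have hgs : (0:ℝ) < Real.Gamma (μ + ν + K + 1) := Real.Gamma_pos_of_pos hK
  -- RHS via Ring.choose ((μ+ν+K) + K) K
  have hch : Ring.choose ((μ + ν + K) + K) (K - 0) =
      Real.Gamma ((μ + ν + K) + K + 1) / (Real.Gamma ((μ + ν + K) + (0:ℕ) + 1) * (K - 0).factorial) :=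
    choose_gamma (by linarith) (Nat.zero_le K)
  simp only [Nat.sub_zero, Nat.cast_zero, add_zero] at hch
  -- LHS: each term
  have hterm : ∀ p ∈ antidiagonal K, co μ p.1 * co ν p.2 =
      (Ring.choose (ν + K) p.1 * Ring.choose (μ + K) p.2) /
        (Real.Gamma (μ + K + 1) * Real.Gamma (ν + K + 1)) := by
    intro p hp
    have hpk := Finset.HasAntidiagonal.mem_antidiagonal.mp hp
    have h1 : p.1 ≤ K := by omega
    have h2 : p.2 ≤ K := by omega
    have e1 : K - p.1 = p.2 := by omega
    have e2 : K - p.2 = p.1 := by omega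
    have cμ := choose_gamma hμ h1  -- Ring.choose (μ+K) (K-p.1) = Γ(μ+K+1)/(Γ(μ+p.1+1)(K-p.1)!)
    have cν := choose_gamma hν h2
    rw [e1] at cμ
    rw [e2] at cν
    unfold co
    rw [cμ, cν]
    have a1 : (0:ℝ) < Real.Gamma (μ + p.1 + 1) := Real.Gamma_pos_of_pos (by
      have : (0:ℝ) ≤ p.1 := Nat.cast_nonneg _
      linarith)
    have a2 : (0:ℝ) < Real.Gamma (ν + p.2 + 1) := Real.Gamma_pos_of_pos (by
      have : (0:ℝ) ≤ p.2 := Nat.cast_nonneg _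
      linarith)
    have f1 : ((p.1.factorial : ℝ)) ≠ 0 := by exact_mod_cast p.1.factorial_pos.ne'
    have f2 : ((p.2.factorial : ℝ)) ≠ 0 := by exact_mod_cast p.2.factorial_pos.ne'
    field_simp
  have hsum : SS μ ν K = (∑ p ∈ antidiagonal K, Ring.choose (ν + K) p.1 * Ring.choose (μ + K) p.2)
      / (Real.Gamma (μ + K + 1) * Real.Gamma (ν + K + 1)) := by
    unfold SS
    rw [Finset.sum_congr rfl hterm, Finset.sum_div]
  have hvdm : (∑ p ∈ antidiagonal K, Ring.choose (ν + K) p.1 * Ring.choose (μ + K) p.2)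
      = Ring.choose ((ν + K) + (μ + K)) K := (Ring.add_choose_eq K (Commute.all _ _)).symm
  rw [hsum, hvdm]
  have harg : (ν + K) + (μ + K) = (μ + ν + K) + K := by ring
  rw [harg, hch]
  have hf : ((K.factorial : ℝ)) ≠ 0 := by exact_mod_cast K.factorial_pos.ne'
  have harg2 : (μ + ν + K) + K + 1 = μ + ν + 2*K + 1 := by ring
  rw [harg2]
  field_simp

section
variable {m : ℝ} (hm : 0 < m)

lemma SS_zero (μ ν : ℝ) : SS μ ν 0 = 1 / (Real.Gamma (μ + 1) * Real.Gamma (ν + 1)) := by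
  unfold SS co
  rw [Finset.Nat.antidiagonal_zero, Finset.sum_singleton]
  norm_num
  ring

include hm

lemma baseA : 4 * SS (m-1) (m-1) 0 = (4*m-2) * SS (m-1) m 0 + 2*m * SS m m 0 := by
  rw [SS_zero, SS_zero, SS_zero]
  have h1 : m - 1 + 1 = m := by ring
  rw [h1, Real.Gamma_add_one hm.ne']
  have hg := (Real.Gamma_pos_of_pos hm).ne'
  field_simp
  ring

lemma baseB : (2*m-1) * SS (m-1) m 0 < 2 * SS (m-1) (m-1) 0 := by
  rw [SS_zero, SS_zero]
  have h1 : m - 1 + 1 = m := by ring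
  rw [h1, Real.Gamma_add_one hm.ne']
  have hg := Real.Gamma_pos_of_pos hm
  rw [mul_one_div, mul_one_div, div_lt_div_iff₀ (by positivity) (by positivity)]
  nlinarith [sq_nonneg (Real.Gamma m)]

lemma SS_closed (K : ℕ) :
    SS (m-1) (m-1) (K+1) = Real.Gamma (2*m+2*K+1) /
        (((K:ℝ)+1) * K.factorial * Real.Gamma (m+K+1)^2 * Real.Gamma (2*m+K)) ∧
    SS (m-1) m (K+1) = (2*m+2*K+1) * Real.Gamma (2*m+2*K+1) /
        (((K:ℝ)+1) * K.factorial * Real.Gamma (m+K+1) * ((m+K+1) * Real.Gamma (m+K+1))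
          * ((2*m+K) * Real.Gamma (2*m+K))) ∧
    SS m m (K+1) = (2*m+2*K+2) * (2*m+2*K+1) * Real.Gamma (2*m+2*K+1) /
        (((K:ℝ)+1) * K.factorial * ((m+K+1) * Real.Gamma (m+K+1))^2
          * ((2*m+K+1) * (2*m+K) * Real.Gamma (2*m+K))) ∧
    SS m m K = Real.Gamma (2*m+2*K+1) /
        ((K.factorial : ℝ) * Real.Gamma (m+K+1)^2 * ((2*m+K) * Real.Gamma (2*m+K))) := by
  have hK : (0:ℝ) ≤ K := Nat.cast_nonneg K
  have hm1 : (-1:ℝ) < m - 1 := by linarith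
  have hmm : (-1:ℝ) < m := by linarith
  have hfact : (((K+1).factorial : ℝ)) = ((K:ℝ)+1) * K.factorial := by
    rw [Nat.factorial_succ]; push_cast; ring
  have hcast : ((K+1 : ℕ) : ℝ) = (K:ℝ)+1 := by push_cast; ring
  -- Gamma recurrences
  have gm : Real.Gamma (m+K+2) = (m+K+1) * Real.Gamma (m+K+1) := by
    rw [show m+(K:ℝ)+2 = (m+K+1)+1 by ring, Real.Gamma_add_one (by linarith)]
  have g2m1 : Real.Gamma (2*m+K+1) = (2*m+K) * Real.Gamma (2*m+K) := by
    rw [show 2*m+(K:ℝ)+1 = (2*m+K)+1 by ring, Real.Gamma_add_one (by linarith)]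
  have g2m2 : Real.Gamma (2*m+K+2) = (2*m+K+1) * ((2*m+K) * Real.Gamma (2*m+K)) := by
    rw [show 2*m+(K:ℝ)+2 = (2*m+K+1)+1 by ring, Real.Gamma_add_one (by linarith), g2m1]
  have gp1 : Real.Gamma (2*m+2*K+2) = (2*m+2*K+1) * Real.Gamma (2*m+2*K+1) := by
    rw [show 2*m+2*(K:ℝ)+2 = (2*m+2*K+1)+1 by ring, Real.Gamma_add_one (by linarith)]
  have gp2 : Real.Gamma (2*m+2*K+3) = (2*m+2*K+2) * ((2*m+2*K+1) * Real.Gamma (2*m+2*K+1)) := by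
    rw [show 2*m+2*(K:ℝ)+3 = (2*m+2*K+2)+1 by ring, Real.Gamma_add_one (by linarith), gp1]
  refine ⟨?_, ?_, ?_, ?_⟩
  · rw [SS_eq hm1 hm1 (by push_cast; linarith)]
    rw [show (m-1) + (m-1) + 2*((K+1:ℕ):ℝ) + 1 = 2*m+2*K+1 from by push_cast; ring,
      show (m-1) + ((K+1:ℕ):ℝ) + 1 = m+(K:ℝ)+1 from by push_cast; ring,
      show (m-1) + (m-1) + ((K+1:ℕ):ℝ) + 1 = 2*m+(K:ℝ) from by push_cast; ring, hfact]
    ring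
  · rw [SS_eq hm1 hmm (by push_cast; linarith)]
    rw [show (m-1) + m + 2*((K+1:ℕ):ℝ) + 1 = 2*m+2*(K:ℝ)+2 from by push_cast; ring,
      show (m-1) + ((K+1:ℕ):ℝ) + 1 = m+(K:ℝ)+1 from by push_cast; ring,
      show m + ((K+1:ℕ):ℝ) + 1 = m+(K:ℝ)+2 from by push_cast; ring,
      show (m-1) + m + ((K+1:ℕ):ℝ) + 1 = 2*m+(K:ℝ)+1 from by push_cast; ring,
      hfact, gm, g2m1, gp1]
  · rw [SS_eq hmm hmm (by push_cast; linarith)]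
    rw [show m + m + 2*((K+1:ℕ):ℝ) + 1 = 2*m+2*(K:ℝ)+3 from by push_cast; ring,
      show m + ((K+1:ℕ):ℝ) + 1 = m+(K:ℝ)+2 from by push_cast; ring,
      show m + m + ((K+1:ℕ):ℝ) + 1 = 2*m+(K:ℝ)+2 from by push_cast; ring,
      hfact, gm, g2m2, gp2]
    ring
  · rw [SS_eq hmm hmm (by push_cast; linarith)]
    rw [show m + m + 2*(K:ℝ) + 1 = 2*m+2*(K:ℝ)+1 from by ring,
      show m + m + (K:ℝ) + 1 = 2*m+(K:ℝ)+1 from by ring, g2m1]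
    ring
end

lemma tailA {m : ℝ} (hm : 0 < m) (K : ℕ) :
    4 * SS (m-1) (m-1) (K+1) <
      4 * SS m m K + (4*m-2) * SS (m-1) m (K+1) + 2*m * SS m m (K+1) := by
  obtain ⟨e1, e2, e3, e4⟩ := SS_closed hm K
  have hK : (0:ℝ) ≤ K := Nat.cast_nonneg K
  have hF : (0:ℝ) < K.factorial := by exact_mod_cast K.factorial_pos
  have hg : (0:ℝ) < Real.Gamma (m+K+1) := Real.Gamma_pos_of_pos (by linarith)
  have hh : (0:ℝ) < Real.Gamma (2*m+K) := Real.Gamma_pos_of_pos (by linarith)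
  have hp : (0:ℝ) < Real.Gamma (2*m+2*K+1) := Real.Gamma_pos_of_pos (by linarith)
  have key : (4 * SS m m K + (4*m-2) * SS (m-1) m (K+1) + 2*m * SS m m (K+1))
      - 4 * SS (m-1) (m-1) (K+1)
      = (2 + 4*(K:ℝ) + 2*(K:ℝ)^2 + 6*m + 10*m*K + 4*m*(K:ℝ)^2 + 4*m^2 + 4*m^2*K)
          * Real.Gamma (2*m+2*K+1) /
        (((K:ℝ)+1) * K.factorial * Real.Gamma (m+K+1)^2 * Real.Gamma (2*m+K)
          * (m+(K:ℝ)+1)^2 * (2*m+(K:ℝ)) * (2*m+(K:ℝ)+1)) := by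
    rw [e1, e2, e3, e4]
    have d1 : ((K:ℝ)+1) ≠ 0 := by linarith
    have d2 : (m+(K:ℝ)+1) ≠ 0 := by linarith
    have d3 : (2*m+(K:ℝ)) ≠ 0 := by linarith
    have d4 : (2*m+(K:ℝ)+1) ≠ 0 := by linarith
    field_simp
    ring
  have hpos : (0:ℝ) < (2 + 4*(K:ℝ) + 2*(K:ℝ)^2 + 6*m + 10*m*K + 4*m*(K:ℝ)^2 + 4*m^2 + 4*m^2*K)
          * Real.Gamma (2*m+2*K+1) /
        (((K:ℝ)+1) * K.factorial * Real.Gamma (m+K+1)^2 * Real.Gamma (2*m+K)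
          * (m+(K:ℝ)+1)^2 * (2*m+(K:ℝ)) * (2*m+(K:ℝ)+1)) := by
    apply div_pos
    · have : (0:ℝ) < 2 + 4*(K:ℝ) + 2*(K:ℝ)^2 + 6*m + 10*m*K + 4*m*(K:ℝ)^2 + 4*m^2 + 4*m^2*K := by
        nlinarith [mul_nonneg hm.le hK, mul_nonneg (mul_nonneg hm.le hm.le) hK,
          mul_nonneg hm.le (mul_nonneg hK hK), mul_nonneg hK hK, sq_nonneg m]
      exact mul_pos this hp
    · positivity
  linarith

lemma tailB {m : ℝ} (hm : 0 < m) (hm2 : 1/2 ≤ m) (K : ℕ) :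
    (2*m-1) * SS (m-1) m (K+1) + 2 * SS m m K ≤ 2 * SS (m-1) (m-1) (K+1) := by
  obtain ⟨e1, e2, e3, e4⟩ := SS_closed hm K
  have hK : (0:ℝ) ≤ K := Nat.cast_nonneg K
  have hF : (0:ℝ) < K.factorial := by exact_mod_cast K.factorial_pos
  have hg : (0:ℝ) < Real.Gamma (m+K+1) := Real.Gamma_pos_of_pos (by linarith)
  have hh : (0:ℝ) < Real.Gamma (2*m+K) := Real.Gamma_pos_of_pos (by linarith)
  have hp : (0:ℝ) < Real.Gamma (2*m+2*K+1) := Real.Gamma_pos_of_pos (by linarith)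
  have key : 2 * SS (m-1) (m-1) (K+1) - ((2*m-1) * SS (m-1) m (K+1) + 2 * SS m m K)
      = (2*m-1) * Real.Gamma (2*m+2*K+1) /
        (((K:ℝ)+1) * K.factorial * Real.Gamma (m+K+1)^2 * Real.Gamma (2*m+K)
          * (m+(K:ℝ)+1) * (2*m+(K:ℝ))) := by
    rw [e1, e2, e4]
    have d1 : ((K:ℝ)+1) ≠ 0 := by linarith
    have d2 : (m+(K:ℝ)+1) ≠ 0 := by linarith
    have d3 : (2*m+(K:ℝ)) ≠ 0 := by linarith
    field_simp
    ring
  have hpos : (0:ℝ) ≤ (2*m-1) * Real.Gamma (2*m+2*K+1) /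
        (((K:ℝ)+1) * K.factorial * Real.Gamma (m+K+1)^2 * Real.Gamma (2*m+K)
          * (m+(K:ℝ)+1) * (2*m+(K:ℝ))) := by
    apply div_nonneg
    · have : (0:ℝ) ≤ 2*m-1 := by linarith
      positivity
    · positivity
  linarith

lemma SS_pos {μ ν : ℝ} (hμ : -1 < μ) (hν : -1 < ν) (K : ℕ) : 0 < SS μ ν K := by
  unfold SS
  apply Finset.sum_pos
  · intro p _
    exact mul_pos (co_pos hμ p.1) (co_pos hν p.2)
  · exact ⟨(0, K), by simp⟩

lemma summable_SSu {μ ν : ℝ} (hμ : -1 < μ) (hν : -1 < ν) (u : ℝ) (hu : 0 ≤ u) :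
    Summable (fun K : ℕ => u ^ K * SS μ ν K) := by
  have hnμ : Summable (fun k : ℕ => ‖u ^ k * co μ k‖) := by
    refine (summable_co hμ u).abs.congr fun k => ?_
    rw [Real.norm_eq_abs]
  have hnν : Summable (fun k : ℕ => ‖u ^ k * co ν k‖) := by
    refine (summable_co hν u).abs.congr fun k => ?_
    rw [Real.norm_eq_abs]
  have hkey : ∀ K : ℕ, (∑ p ∈ antidiagonal K, (u ^ p.1 * co μ p.1) * (u ^ p.2 * co ν p.2))
      = u ^ K * SS μ ν K := by
    intro K
    unfold SS
    rw [mul_sum]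
    refine Finset.sum_congr rfl fun p hp => ?_
    have h := Finset.HasAntidiagonal.mem_antidiagonal.mp hp
    rw [← h, pow_add]
    ring
  have := summable_norm_sum_mul_antidiagonal_of_summable_norm hnμ hnν
  refine this.of_norm.congr fun K => ?_
  exact hkey K

lemma besselI_mul {μ ν t : ℝ} (hμ : -1 < μ) (hν : -1 < ν) (ht : 0 < t) :
    besselI μ t * besselI ν t
      = (t/2)^μ * (t/2)^ν * ∑' K : ℕ, ((t/2)^2) ^ K * SS μ ν K := by
  rw [besselI_eq μ ht, besselI_eq ν ht]
  set u := ((t/2)^2 : ℝ) with hu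
  have hnμ : Summable (fun k : ℕ => ‖u ^ k * co μ k‖) := by
    refine (summable_co hμ u).abs.congr fun k => ?_
    rw [Real.norm_eq_abs]
  have hnν : Summable (fun k : ℕ => ‖u ^ k * co ν k‖) := by
    refine (summable_co hν u).abs.congr fun k => ?_
    rw [Real.norm_eq_abs]
  have hkey : ∀ K : ℕ, (∑ p ∈ antidiagonal K, (u ^ p.1 * co μ p.1) * (u ^ p.2 * co ν p.2))
      = u ^ K * SS μ ν K := by
    intro K
    unfold SS
    rw [mul_sum]
    refine Finset.sum_congr rfl fun p hp => ?_
    have h := Finset.HasAntidiagonal.mem_antidiagonal.mp hp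
    rw [← h, pow_add]
    ring
  calc (t/2)^μ * (∑' k : ℕ, u ^ k * co μ k) * ((t/2)^ν * ∑' k : ℕ, u ^ k * co ν k)
      = (t/2)^μ * (t/2)^ν * ((∑' k : ℕ, u ^ k * co μ k) * ∑' k : ℕ, u ^ k * co ν k) := by ring
    _ = (t/2)^μ * (t/2)^ν * ∑' K : ℕ, u ^ K * SS μ ν K := by
        rw [tsum_mul_tsum_eq_tsum_sum_antidiagonal_of_summable_norm hnμ hnν,
          tsum_congr hkey]

lemma besselI_pos {ν t : ℝ} (hν : -1 < ν) (ht : 0 < t) : 0 < besselI ν t := by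
  rw [besselI_eq ν ht]
  have hw : (0:ℝ) < t/2 := by linarith
  have hu : (0:ℝ) < (t/2)^2 := by positivity
  apply mul_pos (Real.rpow_pos_of_pos hw ν)
  apply Summable.tsum_pos (summable_co hν _) (fun k => le_of_lt (mul_pos (pow_pos hu k) (co_pos hν k))) 0
  exact mul_pos (pow_pos hu 0) (co_pos hν 0)

section core
variable {m t : ℝ}

lemma seriesB (hm : 0 < m) (hm2 : 1/2 ≤ m) {u : ℝ} (hu : 0 < u) :
    (2*m-1) * (∑' K : ℕ, u ^ K * SS (m-1) m K) + 2*u*(∑' K : ℕ, u ^ K * SS m m K)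
      < 2 * ∑' K : ℕ, u ^ K * SS (m-1) (m-1) K := by
  have hm1 : (-1:ℝ) < m - 1 := by linarith
  have hmm : (-1:ℝ) < m := by linarith
  have Sdd := summable_SSu hm1 hmm u hu.le
  have Saa := summable_SSu hm1 hm1 u hu.le
  have Sbb := summable_SSu hmm hmm u hu.le
  set g : ℕ → ℝ := fun K => Nat.casesOn K 0 (fun K' => 2*u*(u^K' * SS m m K')) with hg
  have hgs1 : Summable (fun K : ℕ => g (K+1)) := by
    exact (Sbb.mul_left (2*u)).congr fun K => rfl
  have hgs : Summable g := (summable_nat_add_iff 1).mp hgs1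
  have hgt : ∑' K : ℕ, g K = 2*u*(∑' K : ℕ, u ^ K * SS m m K) := by
    rw [Summable.tsum_eq_zero_add hgs]
    show (0:ℝ) + (∑' K : ℕ, 2*u*(u^K * SS m m K)) = _
    rw [zero_add, tsum_mul_left]
  set fL : ℕ → ℝ := fun K => (2*m-1) * (u^K * SS (m-1) m K) + g K with hfL
  set fR : ℕ → ℝ := fun K => 2 * (u^K * SS (m-1) (m-1) K) with hfR
  have hLs : Summable fL := (Sdd.mul_left (2*m-1)).add hgs
  have hRs : Summable fR := Saa.mul_left 2
  have hle : ∀ K, fL K ≤ fR K := by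
    intro K
    cases K with
    | zero =>
      show (2*m-1) * (u^0 * SS (m-1) m 0) + 0 ≤ 2 * (u^0 * SS (m-1) (m-1) 0)
      simp only [pow_zero, one_mul, add_zero]
      exact (baseB hm).le
    | succ K =>
      show (2*m-1) * (u^(K+1) * SS (m-1) m (K+1)) + 2*u*(u^K * SS m m K)
        ≤ 2 * (u^(K+1) * SS (m-1) (m-1) (K+1))
      have h := tailB hm hm2 K
      have hup : (0:ℝ) < u^(K+1) := pow_pos hu _
      calc (2*m-1) * (u^(K+1) * SS (m-1) m (K+1)) + 2*u*(u^K * SS m m K)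
          = u^(K+1) * ((2*m-1) * SS (m-1) m (K+1) + 2 * SS m m K) := by rw [pow_succ]; ring
        _ ≤ u^(K+1) * (2 * SS (m-1) (m-1) (K+1)) := by
            exact mul_le_mul_of_nonneg_left h hup.le
        _ = 2 * (u^(K+1) * SS (m-1) (m-1) (K+1)) := by ring
  have hstrict : fL 0 < fR 0 := by
    show (2*m-1) * (u^0 * SS (m-1) m 0) + 0 < 2 * (u^0 * SS (m-1) (m-1) 0)
    simp only [pow_zero, one_mul, add_zero]
    exact baseB hm
  have := Summable.tsum_lt_tsum hle hstrict hLs hRs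
  calc (2*m-1) * (∑' K : ℕ, u ^ K * SS (m-1) m K) + 2*u*(∑' K : ℕ, u ^ K * SS m m K)
      = ∑' K : ℕ, fL K := by
        rw [← hgt, ← tsum_mul_left, Summable.tsum_add (Sdd.mul_left (2*m-1)) hgs]
    _ < ∑' K : ℕ, fR K := this
    _ = 2 * ∑' K : ℕ, u ^ K * SS (m-1) (m-1) K := by rw [← tsum_mul_left]

lemma seriesA (hm : 0 < m) {u : ℝ} (hu : 0 < u) :
    4 * (∑' K : ℕ, u ^ K * SS (m-1) (m-1) K)
      < (4*m-2) * (∑' K : ℕ, u ^ K * SS (m-1) m K)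
        + 2*m * (∑' K : ℕ, u ^ K * SS m m K)
        + 4*u*(∑' K : ℕ, u ^ K * SS m m K) := by
  have hm1 : (-1:ℝ) < m - 1 := by linarith
  have hmm : (-1:ℝ) < m := by linarith
  have Sdd := summable_SSu hm1 hmm u hu.le
  have Saa := summable_SSu hm1 hm1 u hu.le
  have Sbb := summable_SSu hmm hmm u hu.le
  set g : ℕ → ℝ := fun K => Nat.casesOn K 0 (fun K' => 4*u*(u^K' * SS m m K')) with hg
  have hgs1 : Summable (fun K : ℕ => g (K+1)) := by
    exact (Sbb.mul_left (4*u)).congr fun K => rfl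
  have hgs : Summable g := (summable_nat_add_iff 1).mp hgs1
  have hgt : ∑' K : ℕ, g K = 4*u*(∑' K : ℕ, u ^ K * SS m m K) := by
    rw [Summable.tsum_eq_zero_add hgs]
    show (0:ℝ) + (∑' K : ℕ, 4*u*(u^K * SS m m K)) = _
    rw [zero_add, tsum_mul_left]
  set fL : ℕ → ℝ := fun K => 4 * (u^K * SS (m-1) (m-1) K) with hfL
  set fR : ℕ → ℝ := fun K =>
    (4*m-2) * (u^K * SS (m-1) m K) + 2*m * (u^K * SS m m K) + g K with hfR
  have hLs : Summable fL := Saa.mul_left 4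
  have hRs : Summable fR := ((Sdd.mul_left (4*m-2)).add (Sbb.mul_left (2*m))).add hgs
  have hle : ∀ K, fL K ≤ fR K := by
    intro K
    cases K with
    | zero =>
      show 4 * (u^0 * SS (m-1) (m-1) 0)
        ≤ (4*m-2) * (u^0 * SS (m-1) m 0) + 2*m * (u^0 * SS m m 0) + 0
      simp only [pow_zero, one_mul, add_zero]
      linarith [baseA hm]
    | succ K =>
      show 4 * (u^(K+1) * SS (m-1) (m-1) (K+1))
        ≤ (4*m-2) * (u^(K+1) * SS (m-1) m (K+1)) + 2*m * (u^(K+1) * SS m m (K+1))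
          + 4*u*(u^K * SS m m K)
      have h := tailA hm K
      have hup : (0:ℝ) < u^(K+1) := pow_pos hu _
      calc 4 * (u^(K+1) * SS (m-1) (m-1) (K+1))
          = u^(K+1) * (4 * SS (m-1) (m-1) (K+1)) := by ring
        _ ≤ u^(K+1) * (4 * SS m m K + (4*m-2) * SS (m-1) m (K+1) + 2*m * SS m m (K+1)) :=
            mul_le_mul_of_nonneg_left h.le hup.le
        _ = (4*m-2) * (u^(K+1) * SS (m-1) m (K+1)) + 2*m * (u^(K+1) * SS m m (K+1))
            + 4*u*(u^K * SS m m K) := by rw [pow_succ]; ring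
  have hstrict : fL 1 < fR 1 := by
    show 4 * (u^1 * SS (m-1) (m-1) 1)
      < (4*m-2) * (u^1 * SS (m-1) m 1) + 2*m * (u^1 * SS m m 1) + 4*u*(u^0 * SS m m 0)
    have h := tailA hm 0
    have hup : (0:ℝ) < u^1 := pow_pos hu _
    calc 4 * (u^1 * SS (m-1) (m-1) 1) = u^1 * (4 * SS (m-1) (m-1) 1) := by ring
      _ < u^1 * (4 * SS m m 0 + (4*m-2) * SS (m-1) m 1 + 2*m * SS m m 1) := by
          exact (mul_lt_mul_iff_right₀ hup).mpr h
      _ = (4*m-2) * (u^1 * SS (m-1) m 1) + 2*m * (u^1 * SS m m 1) + 4*u*(u^0 * SS m m 0) := by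
          ring
  have := Summable.tsum_lt_tsum hle hstrict hLs hRs
  calc 4 * (∑' K : ℕ, u ^ K * SS (m-1) (m-1) K) = ∑' K : ℕ, fL K := by rw [← tsum_mul_left]
    _ < ∑' K : ℕ, fR K := this
    _ = (4*m-2) * (∑' K : ℕ, u ^ K * SS (m-1) m K) + 2*m * (∑' K : ℕ, u ^ K * SS m m K)
        + 4*u*(∑' K : ℕ, u ^ K * SS m m K) := by
        rw [← hgt, ← tsum_mul_left, ← tsum_mul_left (a := 2*m),
          Summable.tsum_add ((Sdd.mul_left (4*m-2)).add (Sbb.mul_left (2*m))) hgs,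
          Summable.tsum_add (Sdd.mul_left (4*m-2)) (Sbb.mul_left (2*m))]
end core

lemma ineqB {m t : ℝ} (hm : 1/2 < m) (ht : 0 < t) :
    (2*m-1) * (besselI (m-1) t * besselI m t)
      < t * (besselI (m-1) t * besselI (m-1) t - besselI m t * besselI m t) := by
  have hm0 : (0:ℝ) < m := by linarith
  have hm1 : (-1:ℝ) < m-1 := by linarith
  have hmm : (-1:ℝ) < m := by linarith
  have hw : (0:ℝ) < t/2 := by linarith
  have e1 := besselI_mul hm1 hmm ht
  have e2 := besselI_mul hm1 hm1 ht
  have e3 := besselI_mul hmm hmm ht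
  have hu0 : (0:ℝ) < (t/2)^2 := by positivity
  have key := seriesB hm0 hm.le hu0
  have hwm : (t/2) ^ m = (t/2) ^ (m-1) * (t/2) := by
    have h := Real.rpow_add hw (m-1) 1
    rw [Real.rpow_one] at h
    rw [show m - 1 + 1 = m by ring] at h
    exact h
  rw [hwm] at e1 e3
  have htw : t = 2*(t/2) := by ring
  have hA0 : (0:ℝ) < (t/2) ^ (m-1) * (t/2) ^ (m-1) :=
    mul_pos (Real.rpow_pos_of_pos hw _) (Real.rpow_pos_of_pos hw _)
  have hlt : (2*m-1) * (∑' K : ℕ, ((t/2)^2) ^ K * SS (m-1) m K)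
      < 2 * (∑' K : ℕ, ((t/2)^2) ^ K * SS (m-1) (m-1) K)
        - 2*((t/2)^2)*(∑' K : ℕ, ((t/2)^2) ^ K * SS m m K) := by linarith
  calc (2*m-1) * (besselI (m-1) t * besselI m t)
      = ((t/2) ^ (m-1) * (t/2) ^ (m-1) * (t/2))
          * ((2*m-1) * (∑' K : ℕ, ((t/2)^2) ^ K * SS (m-1) m K)) := by rw [e1]; ring
    _ < ((t/2) ^ (m-1) * (t/2) ^ (m-1) * (t/2))
          * (2 * (∑' K : ℕ, ((t/2)^2) ^ K * SS (m-1) (m-1) K)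
            - 2*((t/2)^2)*(∑' K : ℕ, ((t/2)^2) ^ K * SS m m K)) := by
        exact (mul_lt_mul_iff_right₀ (by positivity)).mpr hlt
    _ = t * (besselI (m-1) t * besselI (m-1) t - besselI m t * besselI m t) := by
        rw [e2, e3]; ring

lemma ineqA {m t : ℝ} (hm : 0 < m) (ht : 0 < t) :
    t^2 * (besselI (m-1) t * besselI (m-1) t - besselI m t * besselI m t)
      < (2*m-1) * t * (besselI (m-1) t * besselI m t) + 2*m * (besselI m t * besselI m t) := by
  have hm1 : (-1:ℝ) < m-1 := by linarith
  have hmm : (-1:ℝ) < m := by linarith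
  have hw : (0:ℝ) < t/2 := by linarith
  have e1 := besselI_mul hm1 hmm ht
  have e2 := besselI_mul hm1 hm1 ht
  have e3 := besselI_mul hmm hmm ht
  have hu0 : (0:ℝ) < (t/2)^2 := by positivity
  have key := seriesA hm hu0
  have hwm : (t/2) ^ m = (t/2) ^ (m-1) * (t/2) := by
    have h := Real.rpow_add hw (m-1) 1
    rw [Real.rpow_one] at h
    rw [show m - 1 + 1 = m by ring] at h
    exact h
  rw [hwm] at e1 e3
  have ht2 : t^2 = 4*((t/2)^2) := by ring
  have hlt : 4 * (∑' K : ℕ, ((t/2)^2) ^ K * SS (m-1) (m-1) K)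
        - 4*((t/2)^2)*(∑' K : ℕ, ((t/2)^2) ^ K * SS m m K)
      < (4*m-2) * (∑' K : ℕ, ((t/2)^2) ^ K * SS (m-1) m K)
        + 2*m * (∑' K : ℕ, ((t/2)^2) ^ K * SS m m K) := by linarith
  calc t^2 * (besselI (m-1) t * besselI (m-1) t - besselI m t * besselI m t)
      = ((t/2) ^ (m-1) * (t/2) ^ (m-1) * ((t/2)^2))
          * (4 * (∑' K : ℕ, ((t/2)^2) ^ K * SS (m-1) (m-1) K)
            - 4*((t/2)^2)*(∑' K : ℕ, ((t/2)^2) ^ K * SS m m K)) := by rw [e2, e3]; ring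
    _ < ((t/2) ^ (m-1) * (t/2) ^ (m-1) * ((t/2)^2))
          * ((4*m-2) * (∑' K : ℕ, ((t/2)^2) ^ K * SS (m-1) m K)
            + 2*m * (∑' K : ℕ, ((t/2)^2) ^ K * SS m m K)) := by
        exact (mul_lt_mul_iff_right₀ (by positivity)).mpr hlt
    _ = (2*m-1) * t * (besselI (m-1) t * besselI m t) + 2*m * (besselI m t * besselI m t) := by
        rw [e1, e3]; ring

set_option maxHeartbeats 1000000 in
theorem stmt_14 (m b c : ℝ) (hm : 0 < m) (hb : 0 < b) (hc : 1 < c) (x : ℝ) (hx : 0 < x)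
    (hmode : besselI m (x / b) / besselI (m - 1) (x / b) = 1 / c) :
    (2 * m - 1) * b * c / (c ^ 2 - 1) < x ∧
    x < b * c / (c ^ 2 - 1) *
      (m - 1 / 2 + Real.sqrt ((m + 1 / 2) ^ 2 - 2 * m / c ^ 2)) ∧
    b * c / (c ^ 2 - 1) * (m - 1 / 2 + Real.sqrt ((m + 1 / 2) ^ 2 - 2 * m / c ^ 2)) <
      2 * m * b * c / (c ^ 2 - 1) := by
  have ht : 0 < x / b := div_pos hx hb
  have hm1 : (-1:ℝ) < m - 1 := by linarith
  have hmm : (-1:ℝ) < m := by linarith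
  have hJ1 : 0 < besselI (m-1) (x/b) := besselI_pos hm1 ht
  have hJm : 0 < besselI m (x/b) := besselI_pos hmm ht
  have hc0 : (0:ℝ) < c := by linarith
  have hc2 : (0:ℝ) < c^2 - 1 := by nlinarith
  have hmode' : besselI (m-1) (x/b) = c * besselI m (x/b) := by
    rw [div_eq_div_iff hJ1.ne' (by positivity)] at hmode
    linarith
  have hJ2 : 0 < besselI m (x/b) * besselI m (x/b) := mul_pos hJm hJm
  -- quadratic inequality from ineqA
  have hA := ineqA hm ht
  rw [hmode'] at hA
  have hq : (c^2-1)*(x/b)^2 < (2*m-1)*c*(x/b) + 2*m := by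
    have l1 : (x/b)^2 * ((c * besselI m (x/b)) * (c * besselI m (x/b))
          - besselI m (x/b) * besselI m (x/b))
        = ((c^2-1)*(x/b)^2) * (besselI m (x/b) * besselI m (x/b)) := by ring
    have l2 : (2*m-1) * (x/b) * ((c * besselI m (x/b)) * besselI m (x/b))
          + 2*m * (besselI m (x/b) * besselI m (x/b))
        = ((2*m-1)*c*(x/b) + 2*m) * (besselI m (x/b) * besselI m (x/b)) := by ring
    rw [l1, l2] at hA
    exact lt_of_mul_lt_mul_right hA hJ2.le
  -- lower bound
  have lower : (2 * m - 1) * b * c / (c ^ 2 - 1) < x := by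
    rcases le_or_gt m (1/2) with hm2 | hm2
    · have h1 : (2*m-1) * b * c ≤ 0 :=
        mul_nonpos_of_nonpos_of_nonneg (mul_nonpos_of_nonpos_of_nonneg (by linarith) hb.le) hc0.le
      calc (2*m-1) * b * c / (c^2-1) ≤ 0 := div_nonpos_of_nonpos_of_nonneg h1 hc2.le
        _ < x := hx
    · have hB := ineqB hm2 ht
      rw [hmode'] at hB
      have l1 : (2*m-1) * ((c * besselI m (x/b)) * besselI m (x/b))
          = ((2*m-1)*c) * (besselI m (x/b) * besselI m (x/b)) := by ring
      have l2 : (x/b) * ((c * besselI m (x/b)) * (c * besselI m (x/b))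
            - besselI m (x/b) * besselI m (x/b))
          = ((x/b)*(c^2-1)) * (besselI m (x/b) * besselI m (x/b)) := by ring
      rw [l1, l2] at hB
      have h3 : (2*m-1)*c < (x/b)*(c^2-1) := lt_of_mul_lt_mul_right hB hJ2.le
      rw [div_lt_iff₀ hc2]
      have h4 : (x/b)*(c^2-1)*b = x*(c^2-1) := by field_simp
      nlinarith [h3, hb]
  refine ⟨lower, ?_, ?_⟩
  · -- upper bound
    have hy : ((c^2-1)*(x/b) - c*(m-1/2))^2 < c^2 * ((m + 1/2)^2 - 2*m/c^2) := by
      have hexp : c^2 * ((m + 1/2)^2 - 2*m/c^2) = c^2*(m+1/2)^2 - 2*m := by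
        field_simp
      rw [hexp]
      nlinarith [mul_lt_mul_of_pos_left hq hc2]
    have hyx : (c^2-1)*(x/b) - c*(m-1/2) < c * Real.sqrt ((m + 1/2)^2 - 2*m/c^2) := by
      calc (c^2-1)*(x/b) - c*(m-1/2) ≤ |(c^2-1)*(x/b) - c*(m-1/2)| := le_abs_self _
        _ = Real.sqrt (((c^2-1)*(x/b) - c*(m-1/2))^2) := (Real.sqrt_sq_eq_abs _).symm
        _ < Real.sqrt (c^2 * ((m + 1/2)^2 - 2*m/c^2)) := Real.sqrt_lt_sqrt (sq_nonneg _) hy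
        _ = c * Real.sqrt ((m + 1/2)^2 - 2*m/c^2) := by
            rw [Real.sqrt_mul (sq_nonneg c), Real.sqrt_sq hc0.le]
    rw [div_mul_eq_mul_div, lt_div_iff₀ hc2]
    have hbb := mul_lt_mul_of_pos_left hyx hb
    have hexp2 : b * ((c^2-1)*(x/b) - c*(m-1/2)) = x*(c^2-1) - b*c*(m-1/2) := by
      field_simp
    rw [hexp2] at hbb
    nlinarith [hbb]
  · -- third bound
    have hsq : Real.sqrt ((m + 1/2)^2 - 2*m/c^2) < m + 1/2 := by
      rw [Real.sqrt_lt' (by linarith)]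
      have : 0 < 2*m/c^2 := by positivity
      linarith
    rw [div_mul_eq_mul_div, div_lt_div_iff₀ hc2 hc2]
    have hpos : (0:ℝ) < b*c*(c^2-1) := by positivity
    have h6 := mul_lt_mul_of_pos_left
      (show m - 1/2 + Real.sqrt ((m + 1/2)^2 - 2*m/c^2) < 2*m by linarith) hpos
    calc b * c * (m - 1/2 + Real.sqrt ((m + 1/2)^2 - 2*m/c^2)) * (c^2-1)
        = b*c*(c^2-1) * (m - 1/2 + Real.sqrt ((m + 1/2)^2 - 2*m/c^2)) := by ring
      _ < b*c*(c^2-1) * (2*m) := h6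
      _ = 2*m*b*c*(c^2-1) := by ring

end McKayAux
end

section
/- Let m > 0, b > 0 and c > 1. If x > 0 satisfies I_m(x/b)/I_{m−1}(x/b) = 1/c (the mode equation of the McKay Type I distribution with parameters m, b, c), then x > (bc/(c² − 1))·[m − 1 + √((m − 1)² + 4(c² − 1)m/c²)]. -/
open Real MeasureTheory

open Finset

namespace BesselAux

/-- descending factorial -/
def dp : ℕ → ℝ → ℝ
  | 0, _ => 1
  | (n+1), r => dp n r * (r - n)

lemma dp_zero (r : ℝ) : dp 0 r = 1 := rfl
lemma dp_succ (n : ℕ) (r : ℝ) : dp (n+1) r = dp n r * (r - n) := rfl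

lemma dp_succ_left (n : ℕ) (r : ℝ) : dp (n+1) r = r * dp n (r - 1) := by
  induction n generalizing r with
  | zero => simp [dp]
  | succ n ih =>
    rw [dp_succ, ih, dp_succ, mul_assoc]
    push_cast
    ring_nf

lemma dp_pos {n : ℕ} {r : ℝ} (h : (n : ℝ) - 1 < r) : 0 < dp n r := by
  induction n with
  | zero => norm_num [dp]
  | succ n ih =>
    rw [dp_succ]
    have h1 : (n : ℝ) - 1 < r := by push_cast at h ⊢; linarith
    have h2 : (0:ℝ) < r - n := by push_cast at h; linarith
    exact mul_pos (ih h1) h2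

lemma dp_smeval (n : ℕ) (r : ℝ) : (descPochhammer ℤ n).smeval r = dp n r := by
  induction n with
  | zero => simp [descPochhammer_zero, Polynomial.smeval_one, dp]
  | succ n ih =>
    rw [descPochhammer_succ_right, Polynomial.smeval_mul, ih, dp_succ,
      Polynomial.smeval_sub, Polynomial.smeval_X, Polynomial.smeval_natCast]
    simp

lemma vandermonde (r s : ℝ) (n : ℕ) :
    dp n (r + s) = ∑ ij ∈ antidiagonal n, (n.choose ij.1 : ℝ) * (dp ij.1 r * dp ij.2 s) := by
  have h := Ring.descPochhammer_smeval_add (R := ℝ) (r := r) (s := s) n (Commute.all r s)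
  rw [dp_smeval] at h
  rw [h]
  refine Finset.sum_congr rfl fun ij _ => ?_
  rw [dp_smeval, dp_smeval]

lemma gamma_dp (x : ℝ) (hx : 0 < x) (j : ℕ) :
    Real.Gamma (x + j) = dp j (x + j - 1) * Real.Gamma x := by
  induction j with
  | zero => simp [dp]
  | succ j ih =>
    have hxj : x + (j:ℝ) ≠ 0 := by positivity
    have : x + ((j:ℕ)+1 : ℕ) = (x + j) + 1 := by push_cast; ring
    rw [this, Real.Gamma_add_one hxj, ih]
    have h2 : dp (j+1) (x + (j:ℝ) + 1 - 1) = (x + j) * dp j (x + j - 1) := by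
      rw [show x + (j:ℝ) + 1 - 1 = x + (j:ℝ) by ring, dp_succ_left j (x + (j:ℝ))]
    rw [h2]
    ring


/-- term of the Bessel series -/
noncomputable def a (t ν : ℝ) (k : ℕ) : ℝ :=
  (t / 2) ^ (ν + 2 * (k : ℝ)) / (Real.Gamma (ν + (k : ℝ) + 1) * (k.factorial : ℝ))

lemma a_pos {t ν : ℝ} (ht : 0 < t) (hν : -1 < ν) (k : ℕ) : 0 < a t ν k := by
  have h1 : (0:ℝ) < t / 2 := by linarith
  have h2 : (0:ℝ) < ν + (k:ℝ) + 1 := by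
    have : (0:ℝ) ≤ k := Nat.cast_nonneg k
    linarith
  have h3 : (0:ℝ) < Real.Gamma (ν + (k:ℝ) + 1) := Real.Gamma_pos_of_pos h2
  have h4 : (0:ℝ) < (k.factorial : ℝ) := by positivity
  exact div_pos (Real.rpow_pos_of_pos h1 _) (mul_pos h3 h4)

lemma a_succ {t ν : ℝ} (ht : 0 < t) (hν : -1 < ν) (k : ℕ) :
    a t ν (k+1) = a t ν k * ((t/2)^(2:ℝ) / ((ν + k + 1) * (k + 1))) := by
  have h1 : (0:ℝ) < t / 2 := by linarith
  have h2 : (0:ℝ) < ν + (k:ℝ) + 1 := by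
    have : (0:ℝ) ≤ k := Nat.cast_nonneg k
    linarith
  have hgne : ν + (k:ℝ) + 1 ≠ 0 := ne_of_gt h2
  have h3 : (0:ℝ) < Real.Gamma (ν + (k:ℝ) + 1) := Real.Gamma_pos_of_pos h2
  unfold a
  rw [show ν + 2 * ((k:ℕ)+1 : ℕ) = (ν + 2 * (k:ℝ)) + 2 by push_cast; ring,
    Real.rpow_add h1,
    show ν + ((k:ℕ)+1 : ℕ) + 1 = (ν + (k:ℝ) + 1) + 1 by push_cast; ring,
    Real.Gamma_add_one hgne, Nat.factorial_succ]
  push_cast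
  field_simp

lemma summable_a {t ν : ℝ} (ht : 0 < t) (hν : -1 < ν) : Summable (a t ν) := by
  apply summable_of_ratio_norm_eventually_le (r := 1/2) (by norm_num)
  have h1 : (0:ℝ) < t / 2 := by linarith
  filter_upwards [Filter.eventually_ge_atTop (⌈(t/2)^(2:ℝ)⌉₊ + 1)] with k hk
  have hk1 : ((⌈(t/2)^(2:ℝ)⌉₊ : ℝ) + 1) ≤ (k:ℝ) := by exact_mod_cast hk
  have hk2 : (t/2)^(2:ℝ) ≤ (k:ℝ) := by
    have := Nat.le_ceil ((t/2)^(2:ℝ))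
    linarith
  have hkpos : (1:ℝ) ≤ (k:ℝ) := by
    have : (0:ℝ) ≤ (⌈(t/2)^(2:ℝ)⌉₊ : ℝ) := Nat.cast_nonneg _
    linarith
  have hden : (0:ℝ) < (ν + k + 1) * (k + 1) := by
    have : (0:ℝ) < ν + (k:ℝ) + 1 := by linarith
    have : (0:ℝ) < (k:ℝ) + 1 := by linarith
    positivity
  have hak := a_pos ht hν k
  have hfr : (0:ℝ) < (t/2)^(2:ℝ) := Real.rpow_pos_of_pos h1 _
  rw [a_succ ht hν k, Real.norm_of_nonneg (by positivity), Real.norm_of_nonneg hak.le]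
  rw [mul_comm (1/2 : ℝ) _]
  apply mul_le_mul_of_nonneg_left _ (le_of_lt (a_pos ht hν k))
  rw [div_le_iff₀ hden]
  have hr : (0:ℝ) ≤ (t/2)^(2:ℝ) := le_of_lt (Real.rpow_pos_of_pos h1 _)
  nlinarith [hk2, hkpos, hν]

lemma besselI_eq_tsum (ν t : ℝ) : besselI ν t = ∑' k, a t ν k := rfl

lemma besselI_pos {ν t : ℝ} (ht : 0 < t) (hν : -1 < ν) : 0 < besselI ν t := by
  rw [besselI_eq_tsum]
  exact Summable.tsum_pos (summable_a ht hν) (fun k => le_of_lt (a_pos ht hν k)) 0 (a_pos ht hν 0)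


lemma besselI_rec {ν t : ℝ} (ht : 0 < t) (hν : 0 < ν) :
    besselI (ν-1) t = besselI (ν+1) t + (2*ν/t) * besselI ν t := by
  have h2 : (0:ℝ) < t/2 := by linarith
  have h2ne : (t/2) ≠ 0 := ne_of_gt h2
  have hνm : (-1:ℝ) < ν - 1 := by linarith
  have hν0 : (-1:ℝ) < ν := by linarith
  have hν1 : (-1:ℝ) < ν + 1 := by linarith
  have htne : t ≠ 0 := ne_of_gt ht
  have key0 : a t (ν-1) 0 = (2*ν/t) * a t ν 0 := by
    unfold a
    have hg : ν ≠ 0 := ne_of_gt hν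
    have hgpos : 0 < Real.Gamma ν := Real.Gamma_pos_of_pos hν
    rw [show ν - 1 + 2*((0:ℕ):ℝ) = ν - 1 by push_cast; ring,
        show ν - 1 + ((0:ℕ):ℝ) + 1 = ν by push_cast; ring,
        show ν + 2*((0:ℕ):ℝ) = (ν - 1) + 1 by push_cast; ring,
        show ν + ((0:ℕ):ℝ) + 1 = ν + 1 by push_cast; ring,
        Real.rpow_add_one h2ne, Real.Gamma_add_one hg]
    simp only [Nat.factorial_zero, Nat.cast_one, mul_one]
    field_simp
  have key : ∀ k:ℕ, a t (ν-1) (k+1) = a t (ν+1) k + (2*ν/t) * a t ν (k+1) := by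
    intro k
    unfold a
    have hz : (0:ℝ) < ν + (k:ℝ) + 1 := by positivity
    have hzne : ν + (k:ℝ) + 1 ≠ 0 := ne_of_gt hz
    have hgpos : 0 < Real.Gamma (ν + (k:ℝ) + 1) := Real.Gamma_pos_of_pos hz
    have hgne : Real.Gamma (ν + (k:ℝ) + 1) ≠ 0 := ne_of_gt hgpos
    have hfacpos : (0:ℝ) < (k.factorial : ℝ) := by positivity
    rw [show ν - 1 + 2*(((k+1:ℕ)):ℝ) = ν + 1 + 2*(k:ℝ) by push_cast; ring,
        show ν - 1 + (((k+1:ℕ)):ℝ) + 1 = ν + (k:ℝ) + 1 by push_cast; ring,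
        show ν + 1 + (k:ℝ) + 1 = (ν + (k:ℝ) + 1) + 1 by ring,
        show ν + 2*(((k+1:ℕ)):ℝ) = (ν + 1 + 2*(k:ℝ)) + 1 by push_cast; ring,
        show ν + (((k+1:ℕ)):ℝ) + 1 = (ν + (k:ℝ) + 1) + 1 by push_cast; ring,
        Real.rpow_add_one h2ne, Real.Gamma_add_one hzne, Nat.factorial_succ]
    push_cast
    field_simp
    ring
  have hs1 : Summable (fun k => a t ν (k+1)) := (summable_nat_add_iff 1).mpr (summable_a ht hν0)
  have hmain : ∑' k, a t (ν-1) (k+1) = (∑' k, a t (ν+1) k) + (2*ν/t) * ∑' k, a t ν (k+1) := by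
    rw [tsum_congr key, Summable.tsum_add (summable_a ht hν1) (hs1.mul_left _), tsum_mul_left]
  rw [besselI_eq_tsum, besselI_eq_tsum, besselI_eq_tsum,
      Summable.tsum_eq_zero_add (summable_a ht hνm), Summable.tsum_eq_zero_add (summable_a ht hν0), hmain]
  linear_combination key0


lemma prod_coeff {t x y : ℝ} (ht : 0 < t) (hx : -1 < x) (hy : -1 < y) (n : ℕ) :
    ∑ ij ∈ antidiagonal n, a t x ij.1 * a t y ij.2
      = (t/2)^(x+y+2*(n:ℝ)) * dp n (x+y+2*(n:ℝ))
        / ((n.factorial : ℝ) * Real.Gamma (x+(n:ℝ)+1) * Real.Gamma (y+(n:ℝ)+1)) := by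
  have h2 : (0:ℝ) < t/2 := by linarith
  have hxn : (0:ℝ) < x + (n:ℝ) + 1 := by have : (0:ℝ) ≤ (n:ℝ) := Nat.cast_nonneg n; linarith
  have hyn : (0:ℝ) < y + (n:ℝ) + 1 := by have : (0:ℝ) ≤ (n:ℝ) := Nat.cast_nonneg n; linarith
  have hGx : (0:ℝ) < Real.Gamma (x+(n:ℝ)+1) := Real.Gamma_pos_of_pos hxn
  have hGy : (0:ℝ) < Real.Gamma (y+(n:ℝ)+1) := Real.Gamma_pos_of_pos hyn
  have step : ∀ ij ∈ antidiagonal n, a t x ij.1 * a t y ij.2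
      = (t/2)^(x+y+2*(n:ℝ))
        / ((n.factorial : ℝ) * Real.Gamma (x+(n:ℝ)+1) * Real.Gamma (y+(n:ℝ)+1))
        * ((n.choose ij.1 : ℝ) * (dp ij.1 (y+(n:ℝ)) * dp ij.2 (x+(n:ℝ)))) := by
    rintro ⟨k, l⟩ hkl
    rw [Finset.HasAntidiagonal.mem_antidiagonal] at hkl
    have hkn : k ≤ n := hkl ▸ Nat.le_add_right k l
    have hcast : (k:ℝ) + (l:ℝ) = (n:ℝ) := by exact_mod_cast congrArg (Nat.cast (R := ℝ)) hkl
    have hxk : (0:ℝ) < x + (k:ℝ) + 1 := by have : (0:ℝ) ≤ (k:ℝ) := Nat.cast_nonneg k; linarith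
    have hyl : (0:ℝ) < y + (l:ℝ) + 1 := by have : (0:ℝ) ≤ (l:ℝ) := Nat.cast_nonneg l; linarith
    have e1 : Real.Gamma (x+(n:ℝ)+1) = dp l (x+(n:ℝ)) * Real.Gamma (x+(k:ℝ)+1) := by
      have := gamma_dp (x+(k:ℝ)+1) hxk l
      rw [show x+(k:ℝ)+1+(l:ℝ) = x+(n:ℝ)+1 by rw [← hcast]; ring,
          show x+(n:ℝ)+1-1 = x+(n:ℝ) by ring] at this
      exact this
    have e2 : Real.Gamma (y+(n:ℝ)+1) = dp k (y+(n:ℝ)) * Real.Gamma (y+(l:ℝ)+1) := by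
      have := gamma_dp (y+(l:ℝ)+1) hyl k
      rw [show y+(l:ℝ)+1+(k:ℝ) = y+(n:ℝ)+1 by rw [← hcast]; ring,
          show y+(n:ℝ)+1-1 = y+(n:ℝ) by ring] at this
      exact this
    have hfact : (n.factorial:ℝ) = (n.choose k : ℝ) * (k.factorial:ℝ) * (l.factorial:ℝ) := by
      have := Nat.choose_mul_factorial_mul_factorial hkn
      rw [show n - k = l from by omega] at this
      exact_mod_cast congrArg (Nat.cast (R := ℝ)) this.symm
    have hpow : (t/2)^(x+2*(k:ℝ)) * (t/2)^(y+2*(l:ℝ)) = (t/2)^(x+y+2*(n:ℝ)) := by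
      rw [← Real.rpow_add h2]
      congr 1
      rw [← hcast]; ring
    have hdpl : 0 < dp l (x+(n:ℝ)) := by
      apply dp_pos
      have : (l:ℝ) ≤ (n:ℝ) := by exact_mod_cast hkl ▸ Nat.le_add_left l k
      linarith
    have hdpk : 0 < dp k (y+(n:ℝ)) := by
      apply dp_pos
      have : (k:ℝ) ≤ (n:ℝ) := by exact_mod_cast hkn
      linarith
    have hGxk : (0:ℝ) < Real.Gamma (x+(k:ℝ)+1) := Real.Gamma_pos_of_pos hxk
    have hGyl : (0:ℝ) < Real.Gamma (y+(l:ℝ)+1) := Real.Gamma_pos_of_pos hyl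
    have hkfac : (0:ℝ) < (k.factorial:ℝ) := by positivity
    have hlfac : (0:ℝ) < (l.factorial:ℝ) := by positivity
    unfold a
    rw [e1, e2, hfact]
    rw [div_mul_div_comm, hpow]
    have hch : (0:ℝ) < (n.choose k : ℝ) := by
      have := Nat.choose_pos hkn
      exact_mod_cast this
    field_simp
  rw [Finset.sum_congr rfl step, ← Finset.mul_sum]
  have hv := vandermonde (y+(n:ℝ)) (x+(n:ℝ)) n
  rw [show y+(n:ℝ)+(x+(n:ℝ)) = x+y+2*(n:ℝ) by ring] at hv
  rw [← hv]
  ring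

lemma norm_summable_a {t x : ℝ} (ht : 0 < t) (hx : -1 < x) :
    Summable (fun k => ‖a t x k‖) :=
  (summable_a ht hx).congr (fun k => (Real.norm_of_nonneg (a_pos ht hx k).le).symm)

lemma turan {ν t : ℝ} (ht : 0 < t) (hν : 0 < ν) :
    besselI (ν-1) t * besselI (ν+1) t < besselI ν t ^ 2 := by
  have h2 : (0:ℝ) < t/2 := by linarith
  have hνm : (-1:ℝ) < ν - 1 := by linarith
  have hν0 : (-1:ℝ) < ν := by linarith
  have hν1 : (-1:ℝ) < ν + 1 := by linarith
  rw [pow_two, besselI_eq_tsum, besselI_eq_tsum, besselI_eq_tsum,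
      tsum_mul_tsum_eq_tsum_sum_antidiagonal_of_summable_norm
        (norm_summable_a ht hνm) (norm_summable_a ht hν1),
      tsum_mul_tsum_eq_tsum_sum_antidiagonal_of_summable_norm
        (norm_summable_a ht hν0) (norm_summable_a ht hν0)]
  have coeff : ∀ n : ℕ,
      ∑ ij ∈ antidiagonal n, a t (ν-1) ij.1 * a t (ν+1) ij.2
        < ∑ ij ∈ antidiagonal n, a t ν ij.1 * a t ν ij.2 := by
    intro n
    rw [prod_coeff ht hνm hν1 n, prod_coeff ht hν0 hν0 n]
    rw [show ν - 1 + (ν+1) + 2*(n:ℝ) = ν + ν + 2*(n:ℝ) by ring]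
    set z : ℝ := ν + (n:ℝ) with hz
    have hzpos : 0 < z := by have : (0:ℝ) ≤ (n:ℝ) := Nat.cast_nonneg n; rw [hz]; linarith
    have hg : (0:ℝ) < Real.Gamma z := Real.Gamma_pos_of_pos hzpos
    have hgz1 : Real.Gamma (ν - 1 + (n:ℝ) + 1) = Real.Gamma z := by rw [show ν-1+(n:ℝ)+1 = z by rw [hz]; ring]
    have hgz2 : Real.Gamma (ν + 1 + (n:ℝ) + 1) = (z+1) * (z * Real.Gamma z) := by
      rw [show ν+1+(n:ℝ)+1 = (z+1)+1 by rw [hz]; ring, Real.Gamma_add_one (by linarith),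
          Real.Gamma_add_one (ne_of_gt hzpos)]
    have hgz3 : Real.Gamma (ν + (n:ℝ) + 1) = z * Real.Gamma z := by
      rw [show ν+(n:ℝ)+1 = z+1 from by rw [hz], Real.Gamma_add_one (ne_of_gt hzpos)]
    rw [hgz1, hgz2, hgz3]
    have hdp : 0 < dp n (ν + ν + 2*(n:ℝ)) := by
      apply dp_pos
      have : (0:ℝ) ≤ (n:ℝ) := Nat.cast_nonneg n
      linarith
    have hP : 0 < (t/2)^(ν + ν + 2*(n:ℝ)) * dp n (ν + ν + 2*(n:ℝ)) :=
      mul_pos (Real.rpow_pos_of_pos h2 _) hdp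
    have hfac : (0:ℝ) < (n.factorial : ℝ) := by positivity
    apply div_lt_div_of_pos_left hP (by positivity)
    nlinarith [mul_pos (mul_pos (mul_pos hfac hzpos) hg) hg]
  exact Summable.tsum_lt_tsum_of_nonneg
    (fun n => Finset.sum_nonneg fun ij _ => le_of_lt
      (mul_pos (a_pos ht hνm ij.1) (a_pos ht hν1 ij.2)))
    (fun n => le_of_lt (coeff n)) (coeff 0)
    (summable_sum_mul_antidiagonal_of_summable_mul
      (summable_mul_of_summable_norm (norm_summable_a ht hν0) (norm_summable_a ht hν0)))

end BesselAux

set_option maxHeartbeats 1000000 in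
theorem stmt_15 (m b c : ℝ) (hm : 0 < m) (hb : 0 < b) (hc : 1 < c) (x : ℝ) (hx : 0 < x)
    (hmode : besselI m (x / b) / besselI (m - 1) (x / b) = 1 / c) :
    x > b * c / (c ^ 2 - 1) *
      (m - 1 + Real.sqrt ((m - 1) ^ 2 + 4 * (c ^ 2 - 1) * m / c ^ 2)) := by
  have hc0 : (0:ℝ) < c := by linarith
  have hcne : c ≠ 0 := ne_of_gt hc0
  have hc2 : (0:ℝ) < c^2 - 1 := by nlinarith
  have hm1 : (-1:ℝ) < m - 1 := by linarith
  set t : ℝ := x / b with htdef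
  have ht : 0 < t := div_pos hx hb
  have htne : t ≠ 0 := ne_of_gt ht
  have hrec1 := BesselAux.besselI_rec ht hm
  have hrec2 := BesselAux.besselI_rec ht (show (0:ℝ) < m+1 by linarith)
  rw [show m+1-1 = m by ring, show m+1+1 = m+2 by ring] at hrec2
  have hturan := BesselAux.turan ht (show (0:ℝ) < m+1 by linarith)
  rw [show m+1-1 = m by ring, show m+1+1 = m+2 by ring] at hturan
  have hA : 0 < besselI (m-1) t := BesselAux.besselI_pos ht hm1
  have hB : 0 < besselI m t := BesselAux.besselI_pos ht (by linarith)
  set A := besselI (m-1) t with hAdef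
  set B := besselI m t with hBdef
  set C := besselI (m+1) t with hCdef
  set D := besselI (m+2) t with hDdef
  have hAne : A ≠ 0 := ne_of_gt hA
  have hAc : A = c * B := by
    field_simp at hmode
    linarith
  have h1 : t * A = t * C + 2*m*B := by
    rw [hrec1]; field_simp
  have h2 : t * B = t * D + 2*(m+1)*C := by
    rw [hrec2]; field_simp
  have hCeq : t * C = (c*t - 2*m) * B := by
    linear_combination t * hAc - h1
  have hB2 : (0:ℝ) < B * B := mul_pos hB hB
  have h4 : t^2*(B*D) < t^2*C^2 := by
    have := mul_lt_mul_of_pos_left hturan (show (0:ℝ) < t^2 by positivity)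
    linarith
  have h5 : t^2*C^2 = (c*t-2*m)^2*B^2 := by
    linear_combination (t*C + (c*t-2*m)*B) * hCeq
  have h6 : t^2*(B*D) = t^2*B^2 - 2*(m+1)*(c*t-2*m)*B^2 := by
    linear_combination (-(t*B))*h2 - 2*(m+1)*B*hCeq
  have hkey : (c^2 - 1) * t^2 - 2*(m-1)*c*t - 4*m > 0 := by
    nlinarith [h4, h5, h6, hB2]
  -- final algebra with the square root
  set s : ℝ := (c^2-1)*t/c with hsdef
  have hspos : 0 < s := by rw [hsdef]; positivity
  have hident : s^2 - 2*(m-1)*s - 4*(c^2-1)*m/c^2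
      = ((c^2-1)/c^2) * ((c^2-1)*t^2 - 2*(m-1)*c*t - 4*m) := by
    rw [hsdef]; field_simp
  have h7 : s^2 - 2*(m-1)*s > 4*(c^2-1)*m/c^2 := by
    have hpos : ((c^2-1)/c^2) * ((c^2-1)*t^2 - 2*(m-1)*c*t - 4*m) > 0 :=
      mul_pos (by positivity) hkey
    linarith [hident, hpos]
  have hK : (0:ℝ) < 4*(c^2-1)*m/c^2 := by positivity
  have h3 : m - 1 < s := by
    by_contra h
    push_neg at h
    have e1 : 0 ≤ (m - 1 - s) * s := mul_nonneg (by linarith) hspos.le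
    nlinarith [e1, mul_pos hspos hspos]
  have h8 : Real.sqrt ((m-1)^2 + 4*(c^2-1)*m/c^2) < s - (m-1) := by
    rw [Real.sqrt_lt' (by linarith)]
    nlinarith [h7]
  have hx_eq : x = (b*c/(c^2-1)) * s := by
    rw [hsdef, htdef]
    field_simp
  have hfac : 0 < b*c/(c^2-1) := by positivity
  rw [gt_iff_lt, hx_eq]
  exact mul_lt_mul_of_pos_left (by linarith) hfac
end
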